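/- arXiv:1511.08056 — 5 statements merged into one kernel-verified Lean document; each statement's English description precedes it below -/
import Mathlib

section
/- Let N be a proper binary level-1 phylogenetic network on n ≥ 3 leaves with vertex set V, arc set A, and g ≥ 1 galls. Then |V| = 2n − 1 + 2g and |A| = 2n + 3g − 2; consequently 2n+1 ≤ |V| and 2n+1 ≤ |A|. -/
open Relation

noncomputable section

/-- The interior vertices of a path represented as the list of its vertices. -/
def listInterior {α : Type*} (p : List α) : List α := p.tail.dropLast

/-- A (candidate) phylogenetic network: a finite directed graph together with an
injective labelling of a set `X` into its vertices (the leaves). -/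
structure Net (X : Type) : Type 1 where
  V : Type
  finV : Finite V
  arc : V → V → Prop
  leaf : X → V
  leaf_inj : Function.Injective leaf

attribute [instance] Net.finV

namespace Net

variable {X : Type} (N : Net X)

def outdeg (v : N.V) : ℕ := {w | N.arc v w}.ncard
def indeg (v : N.V) : ℕ := {u | N.arc u v}.ncard
def IsLeaf (v : N.V) : Prop := ∃ x, N.leaf x = v
def IsHybrid (v : N.V) : Prop := 2 ≤ N.indeg v

/-- The axioms of a rooted phylogenetic network on `X`: acyclic, the leaves are exactly
the vertices of out-degree 0 (and have in-degree one), there is a root of in-degree 0 and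
out-degree at least 2 from which every vertex is reachable, and every non-root interior
vertex is either a split vertex or a hybrid vertex. -/
def IsPhylo : Prop :=
  (∀ v, ¬ TransGen N.arc v v) ∧
  (∀ v, N.outdeg v = 0 ↔ N.IsLeaf v) ∧
  (∀ x, N.indeg (N.leaf x) = 1) ∧
  (∃ ρ, N.indeg ρ = 0 ∧ 2 ≤ N.outdeg ρ ∧ ∀ v, ReflTransGen N.arc ρ v) ∧
  (∀ v, ¬ N.IsLeaf v →
    N.indeg v = 0 ∨ (N.indeg v = 1 ∧ 2 ≤ N.outdeg v) ∨ (2 ≤ N.indeg v ∧ 1 ≤ N.outdeg v))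

/-- A binary phylogenetic network: the root and split vertices have out-degree 2,
hybrid vertices have in-degree 2 and out-degree 1. -/
def IsBinary : Prop :=
  N.IsPhylo ∧
  ∀ v, N.IsLeaf v ∨ (N.indeg v ≤ 1 ∧ N.outdeg v = 2) ∨ (N.indeg v = 2 ∧ N.outdeg v = 1)

/-- The underlying undirected graph. -/
def ugraph : SimpleGraph N.V where
  Adj v w := v ≠ w ∧ (N.arc v w ∨ N.arc w v)
  symm := ⟨fun _ _ h => ⟨Ne.symm h.1, h.2.symm⟩⟩
  loopless := ⟨fun _ h => h.1 rfl⟩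

/-- A binary level-1 network: binary, every cycle of the underlying graph has at least
4 vertices, and every cycle of the underlying graph contains at most one hybrid vertex
(equivalently, every biconnected component contains at most one hybrid vertex). -/
def IsLevel1 : Prop :=
  N.IsBinary ∧
  (∀ (c : N.V) (p : N.ugraph.Walk c c), p.IsCycle → 4 ≤ p.length) ∧
  (∀ (c : N.V) (p : N.ugraph.Walk c c), p.IsCycle →
    ∀ v ∈ p.support, ∀ w ∈ p.support, N.IsHybrid v → N.IsHybrid w → v = w)

/-- The number of galls of a binary level-1 network (each gall contains exactly one
hybrid vertex, and conversely). -/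
def gallCount : ℕ := {v : N.V | N.IsHybrid v}.ncard

def numVertices : ℕ := Nat.card N.V
def numArcs : ℕ := {p : N.V × N.V | N.arc p.1 p.2}.ncard

/-- An arc whose deletion disconnects the underlying graph. -/
def CutArc (u v : N.V) : Prop :=
  N.arc u v ∧ ¬ (N.ugraph.deleteEdges {s(u, v)}).Connected

/-- The number `c_N` of non-trivial cut arcs (cut arcs whose head is not a leaf). -/
def numNontrivialCutArcs : ℕ :=
  {p : N.V × N.V | N.CutArc p.1 p.2 ∧ ¬ N.IsLeaf p.2}.ncard

/-- The cluster of a vertex: the set of leaf labels below or equal to it. -/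
def cluster (v : N.V) : Set X := {x | ReflTransGen N.arc v (N.leaf x)}

/-- The hardwired cluster system. -/
def clusterSystem : Set (Set X) := {C | ∃ v, C = N.cluster v}

/-- A network whose every vertex has in-degree at most 1 is a tree. -/
def IsTree : Prop := ∀ v, N.indeg v ≤ 1

/-- A directed path from `u` to `v`, given as the list of all its vertices. -/
def IsDiPath (p : List N.V) (u v : N.V) : Prop :=
  p.Chain' N.arc ∧ p.head? = some u ∧ p.getLast? = some v ∧ p.Nodup

/-- `N` displays `T`: a subgraph of `N` is a subdivision of `T`, i.e. there is an
injection of the vertices of `T` into those of `N`, fixing the leaf labels, together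
with internally disjoint directed paths realizing the arcs of `T`. -/
def Displays (T : Net X) : Prop :=
  ∃ (φ : T.V → N.V) (P : T.V → T.V → List N.V),
    Function.Injective φ ∧
    (∀ x, φ (T.leaf x) = N.leaf x) ∧
    (∀ u v, T.arc u v → N.IsDiPath (P u v) (φ u) (φ v)) ∧
    (∀ u v, T.arc u v → ∀ w ∈ listInterior (P u v), ∀ z, φ z ≠ w) ∧
    (∀ u v u' v', T.arc u v → T.arc u' v' → (u, v) ≠ (u', v') →
      ∀ w ∈ listInterior (P u v), w ∉ listInterior (P u' v'))

/-- The softwired cluster system: all clusters of phylogenetic trees on `X`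
displayed by `N`. -/
def softwired : Set (Set X) :=
  {C | ∃ T : Net X, T.IsPhylo ∧ T.IsTree ∧ N.Displays T ∧ C ∈ T.clusterSystem}

/-- The triplet `ab|c` is consistent with `N`. -/
def Consistent (a b c : X) : Prop :=
  a ≠ b ∧ a ≠ c ∧ b ≠ c ∧
  ∃ v w : N.V, v ≠ w ∧ ∃ p₁ p₂ p₃ p₄ : List N.V,
    N.IsDiPath p₁ v (N.leaf c) ∧ N.IsDiPath p₂ v w ∧
    N.IsDiPath p₃ w (N.leaf a) ∧ N.IsDiPath p₄ w (N.leaf b) ∧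
    [p₁, p₂, p₃, p₄].Pairwise (fun p q => ∀ x ∈ listInterior p, x ∉ listInterior q)

/-- The triplet system `R(N)` induced by `N`; the triplet `ab|c` is represented
by the pair `(s(a,b), c)`. -/
def tripletSet : Set (Sym2 X × X) :=
  {t | ∃ a b : X, t.1 = s(a, b) ∧ N.Consistent a b t.2}

/-- Equivalence of networks: an isomorphism of directed graphs fixing leaf labels. -/
def Equiv (N' : Net X) : Prop :=
  ∃ e : N.V ≃ N'.V, (∀ u v, N.arc u v ↔ N'.arc (e u) (e v)) ∧
    ∀ x, e (N.leaf x) = N'.leaf x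

/-- A vertex lying on some cycle of the underlying graph (i.e. on a gall). -/
def OnGall (v : N.V) : Prop :=
  ∃ (c : N.V) (p : N.ugraph.Walk c c), p.IsCycle ∧ v ∈ p.support

/-- A simple level-1 network: exactly one gall, and every leaf is adjacent to a
vertex of that gall. -/
def IsSimple : Prop :=
  N.gallCount = 1 ∧ ∀ (x : X) (u : N.V), N.arc u (N.leaf x) → N.OnGall u

/-- 4-outwards: the underlying graph has no cycle of length four or less. -/
def FourOutwards : Prop :=
  ∀ (c : N.V) (p : N.ugraph.Walk c c), p.IsCycle → 5 ≤ p.length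

/-- Saturated: no vertex is incident with more than one cut arc. -/
def IsSaturated : Prop :=
  ∀ v : N.V, {p : N.V × N.V | N.CutArc p.1 p.2 ∧ (p.1 = v ∨ p.2 = v)}.ncard ≤ 1

/-- A highest cut arc: no cut arc lies above it. -/
def HighestCutArc (u v : N.V) : Prop :=
  N.CutArc u v ∧ ¬ ∃ u' v', N.CutArc u' v' ∧ ReflTransGen N.arc v' u

/-- The partition `Cut(N)` of `X` induced by the highest cut arcs. -/
def cutPartition : Set (Set X) :=
  {C | ∃ u v, N.HighestCutArc u v ∧ C = N.cluster v}

/-- `S` is an SN-set of `R(N)`: there is no triplet `xy|z ∈ R(N)` with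
`x, z ∈ S` and `y ∉ S`. -/
def IsSNSet (S : Set X) : Prop :=
  ∀ a b c : X, N.Consistent a b c → a ∈ S → c ∈ S → b ∈ S

/-- A maximal SN-set: a non-trivial SN-set not strictly contained in any
non-trivial SN-set. -/
def IsMaximalSNSet (S : Set X) : Prop :=
  N.IsSNSet S ∧ S ≠ Set.univ ∧
  ∀ S' : Set X, N.IsSNSet S' → S' ≠ Set.univ → S ⊆ S' → S = S'

/-- Every gall (cycle of the underlying graph) has exactly three outgoing arcs. -/
def EveryGallThreeOutgoing : Prop :=
  ∀ (c : N.V) (p : N.ugraph.Walk c c), p.IsCycle →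
    {q : N.V × N.V | N.arc q.1 q.2 ∧ q.1 ∈ p.support ∧ q.2 ∉ p.support}.ncard = 3

end Net

end


section Aux

open Finset

lemma auxNcardFilter {α : Type*} [Fintype α] (p : α → Prop) [DecidablePred p] :
    {x | p x}.ncard = (Finset.univ.filter p).card := by
  rw [← Set.ncard_coe_finset]; congr 1; ext x; simp

lemma auxSumIteConst {α : Type*} [Fintype α] (p : α → Prop) [DecidablePred p] (c : ℤ) :
    ∑ v, (if p v then c else 0) = (Finset.univ.filter p).card * c := by
  rw [← Finset.sum_filter, Finset.sum_const, nsmul_eq_mul]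

end Aux

/-- a proper binary level-1 network on `n ≥ 3` leaves with `g ≥ 1` galls
has `2n - 1 + 2g` vertices and `2n + 3g - 2` arcs; consequently `2n+1 ≤ |V|` and
`2n+1 ≤ |A|`. -/
theorem stmt1 {X : Type} (N : Net X) (hn : 3 ≤ Nat.card X)
    (hlev : N.IsLevel1) (hproper : 1 ≤ N.gallCount) :
    (N.numVertices : ℤ) = 2 * (Nat.card X : ℤ) - 1 + 2 * (N.gallCount : ℤ) ∧
    (N.numArcs : ℤ) = 2 * (Nat.card X : ℤ) + 3 * (N.gallCount : ℤ) - 2 ∧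
    2 * (Nat.card X : ℤ) + 1 ≤ (N.numVertices : ℤ) ∧
    2 * (Nat.card X : ℤ) + 1 ≤ (N.numArcs : ℤ) := by
  classical
  obtain ⟨⟨⟨hacyc, hleafiff, hleafin, ⟨ρ, hρin, hρout, hρreach⟩, hclass⟩, hdeg⟩, -, -⟩ := hlev
  cases nonempty_fintype N.V
  have leafin : ∀ v, N.IsLeaf v → N.indeg v = 1 := by rintro v ⟨x, rfl⟩; exact hleafin x
  have leafout : ∀ v, N.IsLeaf v → N.outdeg v = 0 := fun v h => (hleafiff v).2 h
  have rooteq : ∀ v, N.indeg v = 0 → v = ρ := by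
    intro v hv
    rcases (hρreach v).cases_tail with h | ⟨c, _, hc⟩
    · exact h
    · exfalso
      have hpos : 0 < N.indeg v := (Set.ncard_pos (Set.toFinite _)).mpr ⟨c, hc⟩
      omega
  have rootdeg : ∀ v, N.indeg v = 0 → ¬ N.IsLeaf v ∧ N.outdeg v = 2 := by
    intro v hv
    have hnl : ¬ N.IsLeaf v := fun hl => by have := leafin v hl; omega
    rcases hdeg v with h | ⟨hi, ho⟩ | ⟨hi, ho⟩
    · exact absurd h hnl
    · exact ⟨hnl, ho⟩
    · omega
  have splitdeg : ∀ v, ¬ N.IsLeaf v → N.indeg v = 1 → N.outdeg v = 2 := by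
    intro v hnl h1
    rcases hdeg v with h | ⟨hi, ho⟩ | ⟨hi, ho⟩
    · exact absurd h hnl
    · exact ho
    · omega
  have hybdeg : ∀ v, N.indeg v = 2 → ¬ N.IsLeaf v ∧ N.outdeg v = 1 := by
    intro v h2
    have hnl : ¬ N.IsLeaf v := fun hl => by have := leafin v hl; omega
    rcases hdeg v with h | ⟨hi, ho⟩ | ⟨hi, ho⟩
    · exact absurd h hnl
    · omega
    · exact ⟨hnl, ho⟩
  have hin2 : ∀ v, N.indeg v ≤ 2 := by
    intro v
    rcases hdeg v with h | ⟨hi, ho⟩ | ⟨hi, ho⟩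
    · have := leafin v h; omega
    · omega
    · omega
  set L : Finset N.V := Finset.univ.filter N.IsLeaf with hLdef
  set R : Finset N.V := Finset.univ.filter (fun v => N.indeg v = 0) with hRdef
  set S : Finset N.V := Finset.univ.filter (fun v => ¬ N.IsLeaf v ∧ N.indeg v = 1) with hSdef
  set H : Finset N.V := Finset.univ.filter (fun v => N.indeg v = 2) with hHdef
  -- cardinalities of the classes
  have hR1 : R.card = 1 := by
    have : R = {ρ} := by
      ext v
      simp only [hRdef, Finset.mem_filter, Finset.mem_univ, true_and, Finset.mem_singleton]
      exact ⟨rooteq v, fun h => h ▸ hρin⟩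
    rw [this, Finset.card_singleton]
  have hLn : L.card = Nat.card X := by
    have h1 : {v | N.IsLeaf v} = Set.range N.leaf := by
      ext v; exact ⟨fun ⟨x, hx⟩ => ⟨x, hx⟩, fun ⟨x, hx⟩ => ⟨x, hx⟩⟩
    have h2 : (Set.range N.leaf).ncard = Nat.card X := by
      rw [← Set.image_univ, Set.ncard_image_of_injective _ N.leaf_inj, Set.ncard_univ]
    rw [hLdef, ← auxNcardFilter, h1, h2]
  have hHg : H.card = N.gallCount := by
    have h1 : {v : N.V | N.IsHybrid v} = {v | N.indeg v = 2} := by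
      ext v
      simp only [Net.IsHybrid, Set.mem_setOf_eq]
      have := hin2 v; omega
    rw [hHdef, ← auxNcardFilter, Net.gallCount, h1]
  -- double counting of arcs
  have houtcard : ∀ v, N.outdeg v = Fintype.card {w // N.arc v w} := by
    intro v
    rw [Net.outdeg, auxNcardFilter, Fintype.card_subtype]
  have hincard : ∀ v, N.indeg v = Fintype.card {u // N.arc u v} := by
    intro v
    rw [Net.indeg, auxNcardFilter, Fintype.card_subtype]
  have hAcard : N.numArcs = Fintype.card {p : N.V × N.V // N.arc p.1 p.2} := by
    rw [Net.numArcs, auxNcardFilter (fun p : N.V × N.V => N.arc p.1 p.2),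
      Fintype.card_subtype]
  have hAout : N.numArcs = ∑ v, N.outdeg v := by
    rw [hAcard, Fintype.card_congr (Equiv.subtypeProdEquivSigmaSubtype fun a b => N.arc a b),
      Fintype.card_sigma]
    exact Finset.sum_congr rfl fun v _ => (houtcard v).symm
  have hAin : N.numArcs = ∑ v, N.indeg v := by
    have e1 : {p : N.V × N.V // N.arc p.1 p.2} ≃ {p : N.V × N.V // N.arc p.2 p.1} :=
      (Equiv.prodComm N.V N.V).subtypeEquiv (fun p => Iff.rfl)
    rw [hAcard, Fintype.card_congr e1,
      Fintype.card_congr (Equiv.subtypeProdEquivSigmaSubtype fun a b => N.arc b a),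
      Fintype.card_sigma]
    exact Finset.sum_congr rfl fun v _ => (hincard v).symm
  -- pointwise degree identities
  have key1 : ∀ v, (N.indeg v : ℤ) =
      (if N.IsLeaf v then 1 else 0) + (if ¬ N.IsLeaf v ∧ N.indeg v = 1 then 1 else 0)
        + (if N.indeg v = 2 then 2 else 0) := by
    intro v
    by_cases hl : N.IsLeaf v
    · have h1 := leafin v hl
      simp [hl, h1]
    · rcases hdeg v with h | ⟨hi, ho⟩ | ⟨hi, ho⟩
      · exact absurd h hl
      · rcases Nat.le_one_iff_eq_zero_or_eq_one.1 hi with h0 | h1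
        · simp [hl, h0]
        · simp [hl, h1]
      · simp [hl, hi]
  have key2 : ∀ v, (N.outdeg v : ℤ) =
      (if N.indeg v = 0 then 2 else 0) + (if ¬ N.IsLeaf v ∧ N.indeg v = 1 then 2 else 0)
        + (if N.indeg v = 2 then 1 else 0) := by
    intro v
    by_cases hl : N.IsLeaf v
    · have h1 := leafin v hl
      have h0 := leafout v hl
      simp [hl, h1, h0]
    · rcases hdeg v with h | ⟨hi, ho⟩ | ⟨hi, ho⟩
      · exact absurd h hl
      · rcases Nat.le_one_iff_eq_zero_or_eq_one.1 hi with h0 | h1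
        · simp [hl, h0, ho]
        · simp [hl, h1, ho]
      · simp [hl, hi, ho]
  have key3 : ∀ v : N.V, (1 : ℤ) =
      (if N.IsLeaf v then 1 else 0) + (if N.indeg v = 0 then 1 else 0)
        + (if ¬ N.IsLeaf v ∧ N.indeg v = 1 then 1 else 0)
        + (if N.indeg v = 2 then 1 else 0) := by
    intro v
    by_cases hl : N.IsLeaf v
    · have h1 := leafin v hl
      simp [hl, h1]
    · rcases hdeg v with h | ⟨hi, ho⟩ | ⟨hi, ho⟩
      · exact absurd h hl
      · rcases Nat.le_one_iff_eq_zero_or_eq_one.1 hi with h0 | h1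
        · simp [hl, h0]
        · simp [hl, h1]
      · simp [hl, hi]
  -- summed identities
  have hsumin : (N.numArcs : ℤ) = L.card * 1 + S.card * 1 + H.card * 2 := by
    rw [hAin, Nat.cast_sum, Finset.sum_congr rfl (fun v _ => key1 v)]
    simp only [Finset.sum_add_distrib, auxSumIteConst]
    rfl
  have hsumout : (N.numArcs : ℤ) = R.card * 2 + S.card * 2 + H.card * 1 := by
    rw [hAout, Nat.cast_sum, Finset.sum_congr rfl (fun v _ => key2 v)]
    simp only [Finset.sum_add_distrib, auxSumIteConst]
    rfl
  have hsumV : (N.numVertices : ℤ) = L.card * 1 + R.card * 1 + S.card * 1 + H.card * 1 := by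
    have h0 : (N.numVertices : ℤ) = ∑ _v : N.V, (1 : ℤ) := by
      rw [Finset.sum_const, nsmul_eq_mul, mul_one, Net.numVertices, Nat.card_eq_fintype_card]
      simp [Finset.card_univ]
    rw [h0, Finset.sum_congr rfl (fun v _ => key3 v)]
    simp only [Finset.sum_add_distrib, auxSumIteConst]
    rfl
  simp only [hR1, hLn, hHg] at hsumin hsumout hsumV
  refine ⟨?_, ?_, ?_, ?_⟩ <;> omega
end

section
/- Let N be a proper binary level-1 phylogenetic network on n ≥ 3 leaves. Then the number of vertices is at most 3n−2 and the number of arcs is at most 3.5(n−1). If n = 3 these bounds are tight and N must be a simple level-1 network. -/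
open Relation

noncomputable section Aux

open Relation SimpleGraph

namespace Net

variable {X : Type} {N : Net X}

section Basics

lemma arc_irrefl (hac : ∀ v, ¬ TransGen N.arc v v) (v : N.V) : ¬ N.arc v v :=
  fun h => hac v (TransGen.single h)

lemma arc_ne (hac : ∀ v, ¬ TransGen N.arc v v) {u v : N.V} (h : N.arc u v) : u ≠ v := by
  rintro rfl; exact arc_irrefl hac u h

lemma adj_of_arc (hac : ∀ v, ¬ TransGen N.arc v v) {u v : N.V} (h : N.arc u v) :
    N.ugraph.Adj u v := ⟨arc_ne hac h, Or.inl h⟩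

lemma adj_of_arc' (hac : ∀ v, ¬ TransGen N.arc v v) {u v : N.V} (h : N.arc u v) :
    N.ugraph.Adj v u := ⟨(arc_ne hac h).symm, Or.inr h⟩

lemma indeg_pos_of_arc {u v : N.V} (h : N.arc u v) : 1 ≤ N.indeg v := by
  have hsub : ({u} : Set N.V) ⊆ {w | N.arc w v} := by
    intro x hx; rcases hx with rfl; exact h
  have := Set.ncard_le_ncard hsub (Set.toFinite _)
  simpa [indeg] using this

lemma outdeg_pos_of_arc {u v : N.V} (h : N.arc u v) : 1 ≤ N.outdeg u := by
  have hsub : ({v} : Set N.V) ⊆ {w | N.arc u w} := by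
    intro x hx; rcases hx with rfl; exact h
  have := Set.ncard_le_ncard hsub (Set.toFinite _)
  simpa [outdeg] using this

lemma two_le_indeg {a b v : N.V} (hne : a ≠ b) (ha : N.arc a v) (hb : N.arc b v) :
    2 ≤ N.indeg v := by
  have hsub : ({a, b} : Set N.V) ⊆ {w | N.arc w v} := by
    intro x hx; rcases hx with rfl | rfl
    exacts [ha, hb]
  have := Set.ncard_le_ncard hsub (Set.toFinite _)
  rwa [Set.ncard_pair hne] at this

/-- Classification of vertices of a binary network. -/
lemma classify (hb : N.IsBinary) (v : N.V) :
    (N.IsLeaf v ∧ N.indeg v = 1 ∧ N.outdeg v = 0) ∨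
    (¬ N.IsLeaf v ∧ N.indeg v ≤ 1 ∧ N.outdeg v = 2) ∨
    (¬ N.IsLeaf v ∧ N.indeg v = 2 ∧ N.outdeg v = 1) := by
  obtain ⟨⟨hac, hleaf, hl1, hroot, hdeg⟩, hb2⟩ := hb
  rcases hb2 v with h | h | h
  · refine Or.inl ⟨h, ?_, (hleaf v).mpr h⟩
    obtain ⟨x, rfl⟩ := h; exact hl1 x
  · refine Or.inr (Or.inl ⟨fun hlf => ?_, h.1, h.2⟩)
    have := (hleaf v).mpr hlf
    omega
  · refine Or.inr (Or.inr ⟨fun hlf => ?_, h.1, h.2⟩)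
    have := (hleaf v).mpr hlf
    omega

lemma hybrid_iff (hb : N.IsBinary) (v : N.V) :
    N.IsHybrid v ↔ (N.indeg v = 2 ∧ N.outdeg v = 1) := by
  constructor
  · intro h2
    rcases classify hb v with h | h | h
    · exact absurd h2 (by rw [IsHybrid]; omega)
    · exact absurd h2 (by rw [IsHybrid]; omega)
    · exact h.2
  · intro h; rw [IsHybrid]; omega

lemma degsum_le_three (hb : N.IsBinary) (v : N.V) : N.indeg v + N.outdeg v ≤ 3 := by
  rcases classify hb v with h | h | h <;> omega

lemma ncard_nbr_le_three (hb : N.IsBinary) (v : N.V) :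
    {w | N.ugraph.Adj v w}.ncard ≤ 3 := by
  have hsub : {w | N.ugraph.Adj v w} ⊆ {w | N.arc v w} ∪ {w | N.arc w v} := by
    rintro w ⟨-, h | h⟩
    exacts [Or.inl h, Or.inr h]
  calc {w | N.ugraph.Adj v w}.ncard ≤ ({w | N.arc v w} ∪ {w | N.arc w v}).ncard :=
        Set.ncard_le_ncard hsub (Set.toFinite _)
    _ ≤ {w | N.arc v w}.ncard + {w | N.arc w v}.ncard := Set.ncard_union_le _ _
    _ ≤ 3 := by have := degsum_le_three hb v; rw [indeg, outdeg] at this; omega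

lemma indeg_pos_of_reach (hroot : ∀ w, ReflTransGen N.arc ρ w) {v : N.V} (hv : v ≠ ρ) :
    1 ≤ N.indeg v := by
  rcases (hroot v).cases_tail with h | ⟨u, -, hu⟩
  · exact absurd h hv
  · exact indeg_pos_of_arc hu

end Basics

section Chains

lemma chain'_transGen_of_sublist {l l' : List N.V} (h : l.Chain' N.arc) (hs : List.Sublist l' l) :
    l'.Chain' (TransGen N.arc) :=
  (h.imp fun _ _ hr => TransGen.single hr).sublist hs

lemma nodup_of_chain' (hac : ∀ v, ¬ TransGen N.arc v v) {l : List N.V}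
    (h : l.Chain' N.arc) : l.Nodup := by
  rw [List.nodup_iff_sublist]
  intro x hx
  exact hac x (List.isChain_cons_cons.mp (chain'_transGen_of_sublist h hx)).1

lemma transGen_of_chain'_getLast {l : List N.V} (h : l.Chain' N.arc) {w a : N.V}
    (hw : w ∈ l) (hl : l.getLast? = some a) : w = a ∨ TransGen N.arc w a := by
  obtain ⟨s, t, rfl⟩ := List.append_of_mem hw
  cases t with
  | nil =>
    left
    rw [List.getLast?_concat] at hl
    exact Option.some_injective _ hl
  | cons b t' =>
    right
    have ha : a ∈ b :: t' := by
      rw [List.getLast?_append_of_ne_nil _ (by simp), List.getLast?_cons_cons] at hl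
      exact List.mem_of_mem_getLast? hl
    have hsub : List.Sublist [w, a] (s ++ w :: (b :: t')) := by
      refine List.Sublist.trans ?_ (List.sublist_append_right s _)
      exact List.Sublist.cons₂ w (List.singleton_sublist.mpr ha)
    exact (List.isChain_cons_cons.mp (chain'_transGen_of_sublist h hsub)).1

lemma not_mem_of_arc_getLast (hac : ∀ v, ¬ TransGen N.arc v v) {l : List N.V}
    (h : l.Chain' N.arc) {a v : N.V} (hl : l.getLast? = some a) (hav : N.arc a v) :
    v ∉ l := by
  intro hv
  rcases transGen_of_chain'_getLast h hv hl with rfl | ht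
  · exact arc_irrefl hac _ hav
  · exact hac v (ht.trans (TransGen.single hav))

lemma exists_chain_of_reflTransGen {u v : N.V} (h : ReflTransGen N.arc u v) :
    ∃ l : List N.V, l.Chain' N.arc ∧ l.head? = some u ∧ l.getLast? = some v := by
  induction h with
  | refl => exact ⟨[u], List.isChain_singleton u, rfl, rfl⟩
  | tail h1 h2 ih =>
    obtain ⟨l, hc, hh, hl⟩ := ih
    cases l with
    | nil => simp at hh
    | cons x l' =>
      refine ⟨x :: l' ++ [_], ?_, ?_, List.getLast?_concat⟩
      · refine List.IsChain.append hc (List.isChain_singleton _) ?_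
        intro p hp q hq
        simp only [List.head?_cons, Option.mem_def, Option.some_inj] at hq
        rw [hl] at hp
        simp only [Option.mem_def, Option.some_inj] at hp
        rw [← hp, ← hq]
        exact h2
      · simpa using hh

end Chains

end Net

section WalkAux

open SimpleGraph

variable {α : Type*} {G : SimpleGraph α}

/-- Turn a list that is a chain of adjacencies into a walk. -/
def chainWalk (G : SimpleGraph α) :
    (l : List α) → l.Chain' G.Adj → (hne : l ≠ []) → G.Walk (l.head hne) (l.getLast hne)
  | [], _, hne => absurd rfl hne
  | [_], _, _ => Walk.nil
  | a :: b :: r, h, _ =>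
    Walk.cons (List.isChain_cons_cons.mp h).1
      ((chainWalk G (b :: r) (List.isChain_cons_cons.mp h).2 (List.cons_ne_nil _ _)).copy rfl
        (List.getLast_cons (List.cons_ne_nil _ _)).symm)

lemma chainWalk_support (G : SimpleGraph α) :
    ∀ (l : List α) (h : l.Chain' G.Adj) (hne : l ≠ []),
      (chainWalk G l h hne).support = l
  | [], _, hne => absurd rfl hne
  | [a], _, _ => rfl
  | a :: b :: r, h, _ => by
    show a :: _ = _
    exact congrArg (a :: ·) ((Walk.support_copy _ _ _).trans (chainWalk_support G (b :: r) _ _))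

/-- In a path from `u` to `v` with `u ≠ v`, there is exactly one edge at `v`. -/
lemma end_edge_unique {u v : α} {p : G.Walk u v} (hp : p.IsPath) (hne : u ≠ v) :
    ∃ y, G.Adj y v ∧ s(y, v) ∈ p.edges ∧ ∀ x, s(v, x) ∈ p.edges → x = y := by
  cases hrev : p.reverse with
  | nil =>
    exfalso
    have := congrArg Walk.length hrev
    rw [Walk.length_reverse] at this
    exact hne (by cases p with
      | nil => rfl
      | cons h q => simp at this)
  | @cons _ w _ hadj q =>
    have hpath : p.reverse.IsPath := hp.reverse
    rw [hrev] at hpath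
    have hq : q.IsPath := hpath.of_cons
    have hvq : v ∉ q.support := by
      have := hpath.support_nodup
      rw [Walk.support_cons] at this
      exact (List.nodup_cons.mp this).1
    refine ⟨w, hadj.symm, ?_, ?_⟩
    · have : s(v, w) ∈ p.reverse.edges := by rw [hrev]; simp
      rw [Walk.edges_reverse, List.mem_reverse] at this
      rwa [Sym2.eq_swap]
    · intro x hx
      have : s(v, x) ∈ p.reverse.edges := by rw [Walk.edges_reverse, List.mem_reverse]; exact hx
      rw [hrev, Walk.edges_cons] at this
      rcases List.mem_cons.mp this with heq | hmem
      · rcases Sym2.eq_iff.mp heq with ⟨-, rfl⟩ | ⟨rfl, rfl⟩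
        · rfl
        · exact absurd rfl hadj.ne
      · exact absurd (Walk.fst_mem_support_of_mem_edges q hmem) hvq

/-- At each vertex of a cycle there are exactly two incident edges. -/
lemma cycle_pair [DecidableEq α] {o z : α} {W : G.Walk o o} (hW : W.IsCycle) (hz : z ∈ W.support) :
    ∃ x y, x ≠ y ∧ s(z, x) ∈ W.edges ∧ s(z, y) ∈ W.edges ∧
      ∀ u, s(z, u) ∈ W.edges → u = x ∨ u = y := by
  have hW' : (W.rotate z hz).IsCycle := hW.rotate hz
  have hperm : ∀ e, e ∈ (W.rotate z hz).edges ↔ e ∈ W.edges :=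
    fun e => (W.rotate_edges z hz).mem_iff
  revert hW' hperm
  cases hrot : W.rotate z hz with
  | nil => intro hW' _; exact absurd rfl hW'.ne_nil
  | @cons _ x _ hadj q =>
    intro hW' hperm
    have hq : q.IsPath := by
      rw [Walk.isPath_def]
      exact hW'.support_nodup
    have hxz : x ≠ z := by
      intro h
      subst h
      exact hadj.ne rfl
    obtain ⟨y, hyadj, hymem, hyuniq⟩ := end_edge_unique hq hxz
    have hedges : (Walk.cons hadj q).edges = s(z, x) :: q.edges := rfl
    have hxy : x ≠ y := by
      intro h
      subst h
      have : s(z, x) ∈ q.edges := by rwa [Sym2.eq_swap] at hymem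
      have htrail := hW'.isTrail.edges_nodup
      rw [hedges] at htrail
      exact (List.nodup_cons.mp htrail).1 this
    refine ⟨x, y, hxy, ?_, ?_, ?_⟩
    · rw [← hperm, hedges]; simp
    · rw [← hperm, hedges]
      right
      rwa [Sym2.eq_swap] at hymem
    · intro u hu
      rw [← hperm, hedges] at hu
      rcases List.mem_cons.mp hu with heq | hmem
      · rcases Sym2.eq_iff.mp heq with ⟨-, rfl⟩ | ⟨rfl, rfl⟩
        · exact Or.inl rfl
        · exact absurd rfl hxz.symm
      · exact Or.inr (hyuniq u hmem)

end WalkAux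

namespace Net

variable {X : Type} {N : Net X}

/-- Specification of a pair of directed paths from `c` to `a` and from `c` to `b`. -/
def PairSpec (N : Net X) (a b c : N.V) (l1 l2 : List N.V) : Prop :=
  l1.Chain' N.arc ∧ l2.Chain' N.arc ∧ l1.head? = some c ∧ l2.head? = some c ∧
  l1.getLast? = some a ∧ l2.getLast? = some b

lemma exists_min_pair {a b : N.V}
    (hex : ∃ c l1 l2, PairSpec N a b c l1 l2) :
    ∃ c l1 l2, PairSpec N a b c l1 l2 ∧ ∀ w ∈ l1, w ∈ l2 → w = c := by
  have hKne : {k | ∃ c l1 l2, PairSpec N a b c l1 l2 ∧ l1.length + l2.length = k}.Nonempty := by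
    obtain ⟨c, l1, l2, hs⟩ := hex
    exact ⟨_, c, l1, l2, hs, rfl⟩
  obtain ⟨c, l1, l2, hs, hlen⟩ := Nat.sInf_mem hKne
  refine ⟨c, l1, l2, hs, ?_⟩
  by_contra hcon
  push_neg at hcon
  obtain ⟨w, hw1, hw2, hwc⟩ := hcon
  obtain ⟨hc1, hc2, hh1, hh2, hg1, hg2⟩ := hs
  obtain ⟨s1, t1, he1⟩ := List.append_of_mem hw1
  obtain ⟨s2, t2, he2⟩ := List.append_of_mem hw2
  subst he1; subst he2
  have hs1 : s1 ≠ [] := by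
    rintro rfl
    simp only [List.nil_append, List.head?_cons, Option.some_inj] at hh1
    exact hwc hh1
  have hs2 : s2 ≠ [] := by
    rintro rfl
    simp only [List.nil_append, List.head?_cons, Option.some_inj] at hh2
    exact hwc hh2
  have hspec' : PairSpec N a b w (w :: t1) (w :: t2) :=
    ⟨hc1.right_of_append, hc2.right_of_append, rfl, rfl,
      by rwa [List.getLast?_append_of_ne_nil _ (by simp)] at hg1,
      by rwa [List.getLast?_append_of_ne_nil _ (by simp)] at hg2⟩
  have hmem : (w :: t1).length + (w :: t2).length ∈
      {k | ∃ c l1 l2, PairSpec N a b c l1 l2 ∧ l1.length + l2.length = k} :=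
    ⟨w, _, _, hspec', rfl⟩
  have hle := Nat.sInf_le hmem
  have h1 := List.length_pos_iff.mpr hs1
  have h2 := List.length_pos_iff.mpr hs2
  simp only [List.length_append, List.length_cons] at hle hlen
  omega

/-- Every hybrid vertex lies on a cycle of the underlying graph. -/
lemma exists_gall (hlev : N.IsLevel1) {v : N.V} (hv : N.IsHybrid v) :
    ∃ (o : N.V) (W : N.ugraph.Walk o o), W.IsCycle ∧ v ∈ W.support := by
  classical
  obtain ⟨hb, hgirth, honehyb⟩ := hlev
  have hphy := hb.1
  obtain ⟨hac, hleaf, hlin, hrootex, hdeg⟩ := hphy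
  have h2 : N.indeg v = 2 := ((hybrid_iff hb v).mp hv).1
  obtain ⟨a, b, hab, hset⟩ := Set.ncard_eq_two.mp h2
  have hav : N.arc a v := by
    have : a ∈ {u | N.arc u v} := by rw [hset]; exact Or.inl rfl
    exact this
  have hbv : N.arc b v := by
    have : b ∈ {u | N.arc u v} := by rw [hset]; exact Or.inr rfl
    exact this
  obtain ⟨ρ, hρ0, hρ2, hreach⟩ := hrootex
  obtain ⟨la, hca, hha, hga⟩ := exists_chain_of_reflTransGen (N := N) (hreach a)
  obtain ⟨lb, hcb, hhb, hgb⟩ := exists_chain_of_reflTransGen (N := N) (hreach b)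
  obtain ⟨c, l1, l2, ⟨hc1, hc2, hh1, hh2, hg1, hg2⟩, hdisj⟩ :=
    exists_min_pair (N := N) ⟨ρ, la, lb, hca, hcb, hha, hhb, hga, hgb⟩
  have hnd1 : l1.Nodup := nodup_of_chain' hac hc1
  have hnd2 : l2.Nodup := nodup_of_chain' hac hc2
  have hvl1 : v ∉ l1 := not_mem_of_arc_getLast hac hc1 hg1 hav
  have hvl2 : v ∉ l2 := not_mem_of_arc_getLast hac hc2 hg2 hbv
  -- destructure
  obtain ⟨r1, rfl⟩ : ∃ r1, l1 = c :: r1 := by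
    cases l1 with
    | nil => simp at hh1
    | cons x r =>
      refine ⟨r, ?_⟩
      simp only [List.head?_cons, Option.some_inj] at hh1
      rw [hh1]
  obtain ⟨r2, rfl⟩ : ∃ r2, l2 = c :: r2 := by
    cases l2 with
    | nil => simp at hh2
    | cons x r =>
      refine ⟨r, ?_⟩
      simp only [List.head?_cons, Option.some_inj] at hh2
      rw [hh2]
  have hcr1 : c ∉ r1 := (List.nodup_cons.mp hnd1).1
  have hcr2 : c ∉ r2 := (List.nodup_cons.mp hnd2).1
  set M : List N.V := r1 ++ v :: (c :: r2).reverse with hM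
  have hMne : M ≠ [] := by simp [hM]
  -- the closed chain
  have hchainL : (c :: M).Chain' N.ugraph.Adj := by
    have hLeq : c :: M = (c :: r1) ++ v :: (c :: r2).reverse := by simp [hM]
    rw [hLeq]
    refine List.IsChain.append (hc1.imp fun _ _ h => adj_of_arc hac h) ?_ ?_
    · rw [List.isChain_cons]
      constructor
      · intro y hy
        rw [List.head?_reverse, hg2] at hy
        simp only [Option.mem_def, Option.some_inj] at hy
        subst hy
        exact adj_of_arc' hac hbv
      · rw [List.isChain_reverse]
        exact hc2.imp fun x y h => adj_of_arc' hac h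
    · intro x hx y hy
      rw [hg1] at hx
      simp only [Option.mem_def, Option.some_inj, List.head?_cons] at hx hy
      subst hx; subst hy
      exact adj_of_arc hac hav
  have hMchain : M.Chain' N.ugraph.Adj := hchainL.tail
  have hMnodup : M.Nodup := by
    rw [hM, List.nodup_append]
    refine ⟨(List.nodup_cons.mp hnd1).2, ?_, ?_⟩
    · rw [List.nodup_cons]
      refine ⟨fun hmem => hvl2 (by simpa using (List.mem_reverse.mp hmem)), by rw [List.nodup_reverse]; exact hnd2⟩
    · intro w hw1 w' hw2 hww
      subst hww
      have hwl1 : w ∈ c :: r1 := List.mem_cons_of_mem _ hw1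
      rcases List.mem_cons.mp hw2 with rfl | hw2'
      · exact hvl1 hwl1
      · have hwl2 : w ∈ c :: r2 := List.mem_reverse.mp hw2'
        have := hdisj w hwl1 hwl2
        subst this
        exact hcr1 hw1
  have hMlast : M.getLast? = some c := by
    rw [hM, List.reverse_cons]
    rw [show r1 ++ v :: (r2.reverse ++ [c]) = (r1 ++ v :: r2.reverse) ++ [c] by simp]
    exact List.getLast?_concat
  have hgetc : M.getLast hMne = c := by
    have := List.getLast?_eq_getLast hMne
    rw [hMlast] at this
    exact (Option.some_inj.mp this).symm
  set R : N.ugraph.Walk (M.head hMne) c :=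
    (chainWalk N.ugraph M hMchain hMne).copy rfl hgetc with hR
  have hRsupp : R.support = M := by
    rw [hR, Walk.support_copy, chainWalk_support]
  have hRpath : R.IsPath := by
    rw [Walk.isPath_def, hRsupp]
    exact hMnodup
  have hheadM : M.head? = some (M.head hMne) := List.head?_eq_head hMne
  have hadjc : N.ugraph.Adj c (M.head hMne) := by
    have := (List.isChain_cons.mp hchainL).1
    exact this _ (by rw [hheadM]; rfl)
  -- the head of M
  have hheadval : (r1 = [] ∧ M.head hMne = v) ∨ (∃ d r1', r1 = d :: r1' ∧ M.head hMne = d) := by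
    cases hr1 : r1 with
    | nil => exact Or.inl ⟨rfl, by subst hr1; simp [hM]⟩
    | cons d r1' => exact Or.inr ⟨d, r1', rfl, by subst hr1; simp [hM]⟩
  have hheadne : M.head hMne ≠ c := by
    rcases hheadval with ⟨-, hh⟩ | ⟨d, r1', hr1, hh⟩
    · rw [hh]; intro h; exact hvl1 (h ▸ List.mem_cons_self)
    · rw [hh]; intro h; exact hcr1 (h ▸ (hr1 ▸ List.mem_cons_self))
  -- decompose the reverse of R
  obtain ⟨y', hadj2, q2, hq2⟩ := Walk.exists_eq_cons_of_ne (Ne.symm hheadne) R.reverse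
  have hMrev : M.reverse = c :: (r2 ++ v :: r1.reverse) := by simp [hM]
  have hsupprev : R.reverse.support = c :: q2.support := by rw [hq2, Walk.support_cons]
  have hsupprev2 : R.reverse.support = M.reverse := by rw [Walk.support_reverse, hRsupp]
  have hq2supp : q2.support = r2 ++ v :: r1.reverse := by
    have h := hsupprev.symm.trans hsupprev2
    rw [hMrev] at h
    exact (List.cons_eq_cons.mp h.symm).2.symm
  have hy' : (r2 ++ v :: r1.reverse).head? = some y' := by
    rw [← hq2supp, q2.support_eq_cons]
    rfl
  have hnotedge : s(c, M.head hMne) ∉ R.edges := by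
    intro hmem
    have hmem' : s(c, M.head hMne) ∈ R.reverse.edges := by
      rw [Walk.edges_reverse, List.mem_reverse]; exact hmem
    rw [hq2, Walk.edges_cons] at hmem'
    have hcq2 : c ∉ q2.support := by
      have hnd : (c :: q2.support).Nodup := by
        rw [← hsupprev, hsupprev2]
        exact List.nodup_reverse.mpr hMnodup
      exact (List.nodup_cons.mp hnd).1
    rcases List.mem_cons.mp hmem' with heq | hmem2
    · have hhy : M.head hMne = y' := by
        rcases Sym2.eq_iff.mp heq with ⟨-, h⟩ | ⟨h1, h2⟩
        · exact h
        · exact absurd h2 hheadne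
      rw [hhy] at hheadval
      cases hr2 : r2 with
      | nil =>
        have hyv : y' = v := by
          rw [hr2] at hy'
          simp only [List.nil_append, List.head?_cons, Option.some_inj] at hy'
          exact hy'.symm
        rcases hheadval with ⟨hr1nil, hh⟩ | ⟨d, r1', hr1, hh⟩
        · -- l1 = [c], l2 = [c] : a = c = b
          rw [hr1nil] at hg1
          rw [hr2] at hg2
          simp only [List.getLast?_singleton, Option.some_inj] at hg1 hg2
          exact hab (hg1.symm ▸ hg2.symm ▸ rfl)
        · rw [hyv] at hh
          exact hvl1 (hh ▸ (hr1 ▸ List.mem_cons_of_mem c (List.mem_cons_self)))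
      | cons e r2' =>
        have hye : y' = e := by
          rw [hr2] at hy'
          simp only [List.cons_append, List.head?_cons, Option.some_inj] at hy'
          exact hy'.symm
        rcases hheadval with ⟨hr1nil, hh⟩ | ⟨d, r1', hr1, hh⟩
        · -- v = e ∈ l2
          rw [hye] at hh
          refine hvl2 ?_
          rw [← hh, hr2]
          exact List.mem_cons_of_mem _ (List.mem_cons_self)
        · -- d = e shared
          rw [hye] at hh
          have hdl1 : d ∈ c :: r1 := hr1 ▸ List.mem_cons_of_mem _ (List.mem_cons_self)
          have hdl2 : d ∈ c :: r2 := by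
            rw [← hh, hr2]
            exact List.mem_cons_of_mem _ (List.mem_cons_self)
          have := hdisj d hdl1 hdl2
          subst this
          exact hcr1 (hr1 ▸ List.mem_cons_self)
    · exact hcq2 (Walk.fst_mem_support_of_mem_edges q2 hmem2)
  refine ⟨c, Walk.cons hadjc R, ?_, ?_⟩
  · rw [Walk.cons_isCycle_iff]
    exact ⟨hRpath, hnotedge⟩
  · rw [Walk.support_cons, hRsupp]
    refine List.mem_cons_of_mem _ ?_
    rw [hM]
    exact List.mem_append.mpr (Or.inr (List.mem_cons_self))

end Net

namespace Net

variable {X : Type} {N : Net X}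

open SimpleGraph Relation

lemma cycle_min (hlev : N.IsLevel1) {o : N.V} {W : N.ugraph.Walk o o} (hW : W.IsCycle) :
    ∃ z ∈ W.support, N.IsHybrid z ∧ ∀ w ∈ W.support, ¬ TransGen N.arc z w := by
  classical
  have hac := hlev.1.1.1
  have hwf : WellFounded (fun x y : N.V => TransGen N.arc y x) := by
    haveI : IsTrans N.V (fun x y : N.V => TransGen N.arc y x) :=
      ⟨fun a b c h1 h2 => h2.trans h1⟩
    haveI : IsIrrefl N.V (fun x y : N.V => TransGen N.arc y x) := ⟨fun a h => hac a h⟩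
    exact Finite.wellFounded_of_trans_of_irrefl _
  obtain ⟨z, hzS, hzmin⟩ := hwf.has_min {w | w ∈ W.support} ⟨o, W.start_mem_support⟩
  refine ⟨z, hzS, ?_, fun w hw ht => hzmin w hw ht⟩
  obtain ⟨x, y, hxy, hx, hy, -⟩ := cycle_pair hW hzS
  have hax : N.arc x z := by
    have hadj : N.ugraph.Adj z x := W.adj_of_mem_edges hx
    rcases hadj.2 with h | h
    · exact absurd (TransGen.single h) (hzmin x (W.snd_mem_support_of_mem_edges hx))
    · exact h
  have hay : N.arc y z := by
    have hadj : N.ugraph.Adj z y := W.adj_of_mem_edges hy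
    rcases hadj.2 with h | h
    · exact absurd (TransGen.single h) (hzmin y (W.snd_mem_support_of_mem_edges hy))
    · exact h
  exact two_le_indeg hxy hax hay

lemma cycle_inarcs (hlev : N.IsLevel1) {o v : N.V} {W : N.ugraph.Walk o o} (hW : W.IsCycle)
    (hv : v ∈ W.support) (hhy : N.IsHybrid v) :
    ∀ u, s(v, u) ∈ W.edges → N.arc u v := by
  obtain ⟨z, hzS, hzhyb, hzmin⟩ := cycle_min hlev hW
  have hzv : z = v := hlev.2.2 o W hW z hzS v hv hzhyb hhy
  subst hzv
  intro u hu
  have hadj := W.adj_of_mem_edges hu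
  rcases hadj.2 with h | h
  · exact absurd (TransGen.single h) (hzmin u (W.snd_mem_support_of_mem_edges hu))
  · exact h

lemma cycle_edge_at_hybrid_iff (hlev : N.IsLevel1) {o v : N.V} {W : N.ugraph.Walk o o}
    (hW : W.IsCycle) (hv : v ∈ W.support) (hhy : N.IsHybrid v) :
    ∀ u, s(v, u) ∈ W.edges ↔ N.arc u v := by
  classical
  intro u
  refine ⟨cycle_inarcs hlev hW hv hhy u, fun harc => ?_⟩
  obtain ⟨x, y, hxy, hx, hy, huniq⟩ := cycle_pair hW hv
  have hax : N.arc x v := cycle_inarcs hlev hW hv hhy x hx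
  have hay : N.arc y v := cycle_inarcs hlev hW hv hhy y hy
  have h2 : N.indeg v = 2 := ((hybrid_iff hlev.1 v).mp hhy).1
  have hpairsub : ({x, y} : Set N.V) ⊆ {w | N.arc w v} := by
    rintro w (rfl | rfl)
    exacts [hax, hay]
  have hseteq : ({x, y} : Set N.V) = {w | N.arc w v} := by
    refine Set.eq_of_subset_of_ncard_le hpairsub ?_ (Set.toFinite _)
    rw [Set.ncard_pair hxy]
    exact le_of_eq h2
  have humem : u ∈ ({x, y} : Set N.V) := by rw [hseteq]; exact harc
  rcases humem with rfl | rfl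
  exacts [hx, hy]

end Net

section MinDegTwo

open SimpleGraph

variable {α : Type*} [Fintype α] {G : SimpleGraph α}

lemma exists_cycle_of_no_deg_one [DecidableEq α]
    {x0 y0 : α} (h0 : G.Adj x0 y0)
    (h2 : ∀ x y, G.Adj x y → ∃ z, G.Adj x z ∧ z ≠ y) :
    ∃ (o : α) (W : G.Walk o o), W.IsCycle := by
  classical
  set K := {k | ∃ (x y : α) (p : G.Walk x y), p.IsPath ∧ p.length = k} with hK
  have h1K : (1 : ℕ) ∈ K := by
    refine ⟨x0, y0, Walk.cons h0 Walk.nil, ?_, rfl⟩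
    rw [Walk.cons_isPath_iff]
    exact ⟨Walk.IsPath.nil, by simp [h0.ne]⟩
  have hKne : K.Nonempty := ⟨1, h1K⟩
  have hbdd : BddAbove K := by
    refine ⟨Fintype.card α, fun k hk => ?_⟩
    obtain ⟨x, y, p, hp, rfl⟩ := hk
    exact le_of_lt hp.length_lt
  obtain ⟨x, y, p, hp, hplen⟩ := Nat.sSup_mem hKne hbdd
  have hk1 : 1 ≤ sSup K := le_csSup hbdd h1K
  have hxy : x ≠ y := by
    intro h
    subst h
    cases p with
    | nil => rw [← hplen] at hk1; simp at hk1
    | cons h q =>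
      have := hp.support_nodup
      rw [Walk.support_cons] at this
      exact (List.nodup_cons.mp this).1 q.end_mem_support
  obtain ⟨w, hadjyw, q, hq⟩ := Walk.exists_eq_cons_of_ne (Ne.symm hxy) p.reverse
  obtain ⟨z, hadjyz, hzw⟩ := h2 y w hadjyw
  by_cases hzmem : z ∈ p.support
  · refine ⟨y, Walk.cons hadjyz (p.dropUntil z hzmem), ?_⟩
    rw [Walk.cons_isCycle_iff]
    refine ⟨hp.dropUntil hzmem, fun hmem => ?_⟩
    have hmem' : s(y, z) ∈ p.edges := Walk.edges_dropUntil_subset p hzmem hmem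
    have hmem2 : s(y, z) ∈ p.reverse.edges := by
      rw [Walk.edges_reverse, List.mem_reverse]; exact hmem'
    rw [hq, Walk.edges_cons] at hmem2
    rcases List.mem_cons.mp hmem2 with heq | hmem3
    · rcases Sym2.eq_iff.mp heq with ⟨-, h⟩ | ⟨h1, -⟩
      · exact hzw h
      · exact hadjyw.ne h1
    · have hynq : y ∉ q.support := by
        have hrevpath : p.reverse.IsPath := hp.reverse
        rw [hq] at hrevpath
        have := hrevpath.support_nodup
        rw [Walk.support_cons] at this
        exact (List.nodup_cons.mp this).1
      exact hynq (Walk.fst_mem_support_of_mem_edges q hmem3)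
  · have hext : (Walk.cons hadjyz.symm p.reverse).IsPath := by
      rw [Walk.cons_isPath_iff]
      refine ⟨hp.reverse, ?_⟩
      rwa [Walk.support_reverse, List.mem_reverse]
    have hmemK : p.reverse.length + 1 ∈ K := ⟨z, x, _, hext, by simp⟩
    have hle := le_csSup hbdd hmemK
    rw [Walk.length_reverse, hplen] at hle
    omega

end MinDegTwo

section SymmDiff

open SimpleGraph

variable {α : Type*}

/-- One-sided step of the "other neighbour" argument for the symmetric difference
of two cycles. -/
lemma sd_other_nbr_aux (E1 E2 : List (Sym2 α))
    (pair1 : ∀ x u, s(x, u) ∈ E1 → ∃ p q, p ≠ q ∧ s(x, p) ∈ E1 ∧ s(x, q) ∈ E1 ∧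
      (∀ w, s(x, w) ∈ E1 → w = p ∨ w = q))
    (pair2 : ∀ x u, s(x, u) ∈ E2 → ∃ p q, p ≠ q ∧ s(x, p) ∈ E2 ∧ s(x, q) ∈ E2 ∧
      (∀ w, s(x, w) ∈ E2 → w = p ∨ w = q))
    {x y : α} (hxy1 : s(x, y) ∈ E1) (hxy2 : s(x, y) ∉ E2) :
    ∃ z, z ≠ y ∧ ((s(x, z) ∈ E1 ∧ s(x, z) ∉ E2) ∨ (s(x, z) ∈ E2 ∧ s(x, z) ∉ E1)) := by
  obtain ⟨p1, q1, hpq1, hp1, hq1, huniq1⟩ := pair1 x y hxy1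
  -- t : the member of {p1, q1} different from y
  obtain ⟨t, ht1, hty⟩ : ∃ t, s(x, t) ∈ E1 ∧ t ≠ y := by
    rcases huniq1 y hxy1 with rfl | rfl
    · exact ⟨q1, hq1, fun h => hpq1 h.symm⟩
    · exact ⟨p1, hp1, hpq1⟩
  by_cases ht2 : s(x, t) ∈ E2
  · obtain ⟨p2, q2, hpq2, hp2, hq2, huniq2⟩ := pair2 x t ht2
    obtain ⟨t', ht'2, ht't⟩ : ∃ t', s(x, t') ∈ E2 ∧ t' ≠ t := by
      rcases huniq2 t ht2 with rfl | rfl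
      · exact ⟨q2, hq2, fun h => hpq2 h.symm⟩
      · exact ⟨p2, hp2, hpq2⟩
    have ht'y : t' ≠ y := by
      rintro rfl
      exact hxy2 ht'2
    have ht'1 : s(x, t') ∉ E1 := by
      intro h
      rcases huniq1 t' h with rfl | rfl <;>
        rcases huniq1 t ht1 with rfl | rfl <;>
        rcases huniq1 y hxy1 with rfl | rfl <;>
        first
          | exact ht't rfl
          | exact ht'y rfl
          | exact hty rfl
          | exact hpq1 rfl
    exact ⟨t', ht'y, Or.inr ⟨ht'2, ht'1⟩⟩
  · exact ⟨t, hty, Or.inl ⟨ht1, ht2⟩⟩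

end SymmDiff

namespace Net

variable {X : Type} {N : Net X}

open SimpleGraph Relation

/-- The symmetric difference graph of two edge lists. -/
def sdGraph (N : Net X) (E1 E2 : List (Sym2 N.V)) : SimpleGraph N.V where
  Adj x y := x ≠ y ∧ ((s(x, y) ∈ E1 ∧ s(x, y) ∉ E2) ∨ (s(x, y) ∈ E2 ∧ s(x, y) ∉ E1))
  symm := ⟨by
    rintro x y ⟨hne, h⟩
    refine ⟨hne.symm, ?_⟩
    rwa [Sym2.eq_swap] at h⟩
  loopless := ⟨fun x h => h.1 rfl⟩

lemma sd_machinery (hlev : N.IsLevel1) [Fintype N.V] [DecidableEq N.V] {o1 o2 : N.V}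
    {W1 : N.ugraph.Walk o1 o1} {W2 : N.ugraph.Walk o2 o2}
    (h1 : W1.IsCycle) (h2 : W2.IsCycle) {p q : N.V}
    (hpq : (N.sdGraph W1.edges W2.edges).Adj p q) :
    ∃ z u, N.IsHybrid z ∧ (z ∈ W1.support ∨ z ∈ W2.support) ∧
      ∃ (o : N.V) (K : N.ugraph.Walk o o), K.IsCycle ∧ z ∈ K.support ∧
      (∀ e ∈ K.edges, (e ∈ W1.edges ∧ e ∉ W2.edges) ∨ (e ∈ W2.edges ∧ e ∉ W1.edges)) ∧
      s(z, u) ∈ K.edges := by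
  classical
  have pair1 : ∀ x u, s(x, u) ∈ W1.edges → ∃ a b, a ≠ b ∧ s(x, a) ∈ W1.edges ∧
      s(x, b) ∈ W1.edges ∧ (∀ w, s(x, w) ∈ W1.edges → w = a ∨ w = b) := by
    intro x u hx
    obtain ⟨a, b, hab, ha, hb, huniq⟩ := cycle_pair h1 (W1.fst_mem_support_of_mem_edges hx)
    exact ⟨a, b, hab, ha, hb, huniq⟩
  have pair2 : ∀ x u, s(x, u) ∈ W2.edges → ∃ a b, a ≠ b ∧ s(x, a) ∈ W2.edges ∧
      s(x, b) ∈ W2.edges ∧ (∀ w, s(x, w) ∈ W2.edges → w = a ∨ w = b) := by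
    intro x u hx
    obtain ⟨a, b, hab, ha, hb, huniq⟩ := cycle_pair h2 (W2.fst_mem_support_of_mem_edges hx)
    exact ⟨a, b, hab, ha, hb, huniq⟩
  have hdeg : ∀ x y, (N.sdGraph W1.edges W2.edges).Adj x y →
      ∃ z, (N.sdGraph W1.edges W2.edges).Adj x z ∧ z ≠ y := by
    rintro x y ⟨hne, hmem | hmem⟩
    · obtain ⟨z, hzy, hz⟩ := sd_other_nbr_aux W1.edges W2.edges pair1 pair2 hmem.1 hmem.2
      refine ⟨z, ⟨?_, hz⟩, hzy⟩
      rcases hz with ⟨hz1, -⟩ | ⟨hz2, -⟩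
      exacts [(W1.adj_of_mem_edges hz1).ne, (W2.adj_of_mem_edges hz2).ne]
    · obtain ⟨z, hzy, hz⟩ := sd_other_nbr_aux W2.edges W1.edges pair2 pair1 hmem.1 hmem.2
      refine ⟨z, ⟨?_, hz.symm⟩, hzy⟩
      rcases hz with ⟨hz1, -⟩ | ⟨hz2, -⟩
      exacts [(W2.adj_of_mem_edges hz1).ne, (W1.adj_of_mem_edges hz2).ne]
  obtain ⟨o, K0, hK0⟩ := exists_cycle_of_no_deg_one hpq hdeg
  have hle : N.sdGraph W1.edges W2.edges ≤ N.ugraph := by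
    rintro x y ⟨hne, h⟩
    rcases h with ⟨h, -⟩ | ⟨h, -⟩
    exacts [W1.adj_of_mem_edges h, W2.adj_of_mem_edges h]
  set K := K0.mapLe hle with hKdef
  have hK : K.IsCycle := (Walk.mapLe_isCycle hle).mpr hK0
  have hKedges : K.edges = K0.edges := by
    rw [hKdef]
    show (K0.map _).edges = K0.edges
    rw [Walk.edges_map]
    have heq : ∀ e : Sym2 N.V, Sym2.map (Hom.ofLE hle) e = e := by
      intro e
      induction e with
      | _ a b => rfl
    calc List.map (Sym2.map (Hom.ofLE hle)) K0.edges
        = List.map id K0.edges := List.map_congr_left (fun e _ => heq e)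
      _ = K0.edges := List.map_id _
  have hKsub : ∀ e ∈ K.edges, (e ∈ W1.edges ∧ e ∉ W2.edges) ∨
      (e ∈ W2.edges ∧ e ∉ W1.edges) := by
    intro e he
    rw [hKedges] at he
    have hmm := K0.edges_subset_edgeSet he
    induction e with
    | _ a b => exact ((SimpleGraph.mem_edgeSet _).mp hmm).2
  obtain ⟨z, hzK, hzhyb, -⟩ := cycle_min hlev hK
  obtain ⟨xz, yz, -, hxz, -, -⟩ := cycle_pair hK hzK
  have hzin : z ∈ W1.support ∨ z ∈ W2.support := by
    rcases hKsub _ hxz with ⟨h, -⟩ | ⟨h, -⟩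
    exacts [Or.inl (W1.fst_mem_support_of_mem_edges h),
      Or.inr (W2.fst_mem_support_of_mem_edges h)]
  exact ⟨z, xz, hzhyb, hzin, o, K, hK, hzK, hKsub, hxz⟩

/-- There is a unique cycle through a given hybrid vertex (as an edge set). -/
lemma gall_unique (hlev : N.IsLevel1) [Fintype N.V] [DecidableEq N.V] {v o1 o2 : N.V}
    {W1 : N.ugraph.Walk o1 o1} {W2 : N.ugraph.Walk o2 o2}
    (h1 : W1.IsCycle) (h2 : W2.IsCycle)
    (hv1 : v ∈ W1.support) (hv2 : v ∈ W2.support) (hhy : N.IsHybrid v) :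
    ∀ e, e ∈ W1.edges ↔ e ∈ W2.edges := by
  by_contra hcon
  push_neg at hcon
  obtain ⟨e, he⟩ := hcon
  have hsplit : (e ∈ W1.edges ∧ e ∉ W2.edges) ∨ (e ∈ W2.edges ∧ e ∉ W1.edges) := by
    tauto
  obtain ⟨p, q, hpq⟩ : ∃ p q, (N.sdGraph W1.edges W2.edges).Adj p q := by
    induction e with
    | _ a b =>
      refine ⟨a, b, ?_, hsplit⟩
      rcases hsplit with ⟨h, -⟩ | ⟨h, -⟩
      exacts [(W1.adj_of_mem_edges h).ne, (W2.adj_of_mem_edges h).ne]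
  obtain ⟨z, u, hzhyb, hzin, o, K, hK, hzK, hKsub, hzu⟩ := sd_machinery hlev h1 h2 hpq
  have hzv : z = v := by
    rcases hzin with hz | hz
    · exact hlev.2.2 o1 W1 h1 z hz v hv1 hzhyb hhy
    · exact hlev.2.2 o2 W2 h2 z hz v hv2 hzhyb hhy
  subst hzv
  have hiff1 := cycle_edge_at_hybrid_iff hlev h1 hv1 hhy u
  have hiff2 := cycle_edge_at_hybrid_iff hlev h2 hv2 hhy u
  rcases hKsub _ hzu with ⟨hmem, hnmem⟩ | ⟨hmem, hnmem⟩
  · exact hnmem (hiff2.mpr (hiff1.mp hmem))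
  · exact hnmem (hiff1.mpr (hiff2.mp hmem))

/-- Galls through distinct hybrid vertices are vertex-disjoint. -/
lemma gall_disjoint (hlev : N.IsLevel1) [Fintype N.V] [DecidableEq N.V] {v v' o1 o2 : N.V}
    {W1 : N.ugraph.Walk o1 o1} {W2 : N.ugraph.Walk o2 o2}
    (h1 : W1.IsCycle) (h2 : W2.IsCycle)
    (hv1 : v ∈ W1.support) (hv2 : v' ∈ W2.support)
    (hy1 : N.IsHybrid v) (hy2 : N.IsHybrid v') (hvv : v ≠ v')
    {u : N.V} (hu1 : u ∈ W1.support) (hu2 : u ∈ W2.support) : False := by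
  have hb := hlev.1
  have hvW2 : v ∉ W2.support := fun h => hvv (hlev.2.2 o2 W2 h2 v h v' hv2 hy1 hy2)
  have hv'W1 : v' ∉ W1.support := fun h => hvv (hlev.2.2 o1 W1 h1 v hv1 v' h hy1 hy2)
  obtain ⟨x1, y1, hxy1, hx1, hy1e, -⟩ := cycle_pair h1 hu1
  obtain ⟨x2, y2, hxy2, hx2, hy2e, -⟩ := cycle_pair h2 hu2
  have hshared : ∃ w, s(u, w) ∈ W1.edges ∧ s(u, w) ∈ W2.edges := by
    by_contra hcon
    push_neg at hcon
    have hx1x2 : x1 ≠ x2 := fun h => hcon x2 (h ▸ hx1) hx2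
    have hx1y2 : x1 ≠ y2 := fun h => hcon y2 (h ▸ hx1) hy2e
    have hy1x2 : y1 ≠ x2 := fun h => hcon x2 (h ▸ hy1e) hx2
    have hy1y2 : y1 ≠ y2 := fun h => hcon y2 (h ▸ hy1e) hy2e
    have hsub : ({x1, y1, x2, y2} : Set N.V) ⊆ {w | N.ugraph.Adj u w} := by
      rintro w (rfl | rfl | rfl | rfl)
      exacts [W1.adj_of_mem_edges hx1, W1.adj_of_mem_edges hy1e,
        W2.adj_of_mem_edges hx2, W2.adj_of_mem_edges hy2e]
    have hcard : ({x1, y1, x2, y2} : Set N.V).ncard = 4 := by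
      rw [Set.ncard_insert_of_notMem (by simp [hx1y2, hx1x2, hxy1]) (Set.toFinite _),
        Set.ncard_insert_of_notMem (by simp [hy1x2, hy1y2]) (Set.toFinite _),
        Set.ncard_pair hxy2]
    have hle := Set.ncard_le_ncard hsub (Set.toFinite _)
    rw [hcard] at hle
    have := ncard_nbr_le_three hb u
    omega
  obtain ⟨w0, hw01, hw02⟩ := hshared
  obtain ⟨a1, b1, hab1, ha1, hb1, -⟩ := cycle_pair h1 hv1
  have hpq : (N.sdGraph W1.edges W2.edges).Adj v a1 :=
    ⟨(W1.adj_of_mem_edges ha1).ne,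
      Or.inl ⟨ha1, fun h => hvW2 (W2.fst_mem_support_of_mem_edges h)⟩⟩
  obtain ⟨z, u', hzhyb, hzin, o, K, hK, hzK, hKsub, hzu⟩ := sd_machinery hlev h1 h2 hpq
  have hzv : z = v ∨ z = v' := by
    rcases hzin with hz | hz
    · exact Or.inl (hlev.2.2 o1 W1 h1 z hz v hv1 hzhyb hy1)
    · exact Or.inr (hlev.2.2 o2 W2 h2 z hz v' hv2 hzhyb hy2)
  rcases hzv with rfl | rfl
  · have hiff := gall_unique hlev hK h1 hzK hv1 hzhyb
    have : s(u, w0) ∈ K.edges := (hiff _).mpr hw01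
    rcases hKsub _ this with ⟨-, hn⟩ | ⟨-, hn⟩
    exacts [hn hw02, hn hw01]
  · have hiff := gall_unique hlev hK h2 hzK hv2 hzhyb
    have : s(u, w0) ∈ K.edges := (hiff _).mpr hw02
    rcases hKsub _ this with ⟨-, hn⟩ | ⟨-, hn⟩
    exacts [hn hw02, hn hw01]

end Net

namespace Net

variable {X : Type} {N : Net X}

lemma numArcs_eq_sum_outdeg [Fintype N.V] : N.numArcs = ∑ v : N.V, N.outdeg v := by
  classical
  rw [numArcs, Set.ncard_eq_toFinset_card']
  rw [show {p : N.V × N.V | N.arc p.1 p.2}.toFinset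
      = Finset.univ.filter (fun p : N.V × N.V => N.arc p.1 p.2) by ext p; simp]
  rw [Finset.card_eq_sum_card_fiberwise
    (f := Prod.fst) (t := Finset.univ) (fun x _ => Finset.mem_univ _)]
  refine Finset.sum_congr rfl fun v _ => ?_
  rw [outdeg, Set.ncard_eq_toFinset_card']
  refine Finset.card_bij (fun p _ => p.2) ?_ ?_ ?_
  · intro p hp
    simp only [Finset.mem_filter, Finset.mem_univ, true_and] at hp
    simp only [Set.mem_toFinset, Set.mem_setOf_eq]
    rw [← hp.2]
    exact hp.1
  · intro p hp p' hp' heq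
    simp only [Finset.mem_filter, Finset.mem_univ, true_and] at hp hp'
    exact Prod.ext (hp.2.trans hp'.2.symm) heq
  · intro w hw
    simp only [Set.mem_toFinset, Set.mem_setOf_eq] at hw
    exact ⟨(v, w), by simp [hw], rfl⟩

lemma numArcs_eq_sum_indeg [Fintype N.V] : N.numArcs = ∑ v : N.V, N.indeg v := by
  classical
  rw [numArcs, Set.ncard_eq_toFinset_card']
  rw [show {p : N.V × N.V | N.arc p.1 p.2}.toFinset
      = Finset.univ.filter (fun p : N.V × N.V => N.arc p.1 p.2) by ext p; simp]
  rw [Finset.card_eq_sum_card_fiberwise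
    (f := Prod.snd) (t := Finset.univ) (fun x _ => Finset.mem_univ _)]
  refine Finset.sum_congr rfl fun v _ => ?_
  rw [indeg, Set.ncard_eq_toFinset_card']
  refine Finset.card_bij (fun p _ => p.1) ?_ ?_ ?_
  · intro p hp
    simp only [Finset.mem_filter, Finset.mem_univ, true_and] at hp
    simp only [Set.mem_toFinset, Set.mem_setOf_eq]
    rw [← hp.2]
    exact hp.1
  · intro p hp p' hp' heq
    simp only [Finset.mem_filter, Finset.mem_univ, true_and] at hp hp'
    exact Prod.ext heq (hp.2.trans hp'.2.symm)
  · intro w hw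
    simp only [Set.mem_toFinset, Set.mem_setOf_eq] at hw
    exact ⟨(w, v), by simp [hw], rfl⟩

/-- A vertex on a cycle is not a leaf. -/
lemma not_leaf_of_on_cycle (hlev : N.IsLevel1) [Fintype N.V] [DecidableEq N.V] {o z : N.V}
    {W : N.ugraph.Walk o o} (hW : W.IsCycle) (hz : z ∈ W.support) : ¬ N.IsLeaf z := by
  intro hlf
  obtain ⟨x, y, hxy, hx, hy, -⟩ := cycle_pair hW hz
  have hsub : ({x, y} : Set N.V) ⊆ {w | N.ugraph.Adj z w} := by
    rintro w (rfl | rfl)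
    exacts [W.adj_of_mem_edges hx, W.adj_of_mem_edges hy]
  have h2 : 2 ≤ {w | N.ugraph.Adj z w}.ncard := by
    have := Set.ncard_le_ncard hsub (Set.toFinite _)
    rwa [Set.ncard_pair hxy] at this
  have hsub2 : {w | N.ugraph.Adj z w} ⊆ {w | N.arc z w} ∪ {w | N.arc w z} := by
    rintro w ⟨-, h | h⟩
    exacts [Or.inl h, Or.inr h]
  have hle : {w | N.ugraph.Adj z w}.ncard ≤ N.outdeg z + N.indeg z := by
    calc {w | N.ugraph.Adj z w}.ncard
        ≤ ({w | N.arc z w} ∪ {w | N.arc w z}).ncard :=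
          Set.ncard_le_ncard hsub2 (Set.toFinite _)
      _ ≤ _ := Set.ncard_union_le _ _
  rcases classify hlev.1 z with h | h | h
  · rw [h.2.1, h.2.2] at hle; omega
  · exact h.1 hlf
  · exact h.1 hlf

/-- The support of a cycle, minus its hybrid vertex, consists of at least three
vertices, all of which are non-leaf, non-hybrid. -/
lemma cycle_support_card (hlev : N.IsLevel1) [Fintype N.V] [DecidableEq N.V] {o : N.V}
    {W : N.ugraph.Walk o o} (hW : W.IsCycle) : 4 ≤ W.support.toFinset.card := by
  have hlen : 4 ≤ W.length := hlev.2.1 o W hW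
  have htail : W.support.tail.toFinset ⊆ W.support.toFinset := by
    intro x hx
    rw [List.mem_toFinset] at hx ⊢
    exact List.mem_of_mem_tail hx
  have hcard : W.support.tail.toFinset.card = W.length := by
    rw [List.toFinset_card_of_nodup hW.support_nodup, List.length_tail, Walk.length_support]
    omega
  have := Finset.card_le_card htail
  omega

end Net

/-- a proper binary level-1 network on `n ≥ 3` leaves has at most `3n-2`
vertices and at most `3.5(n-1)` arcs; for `n = 3` these bounds are tight and the
network must be simple. -/
theorem stmt2 {X : Type} (N : Net X) (hn : 3 ≤ Nat.card X)
    (hlev : N.IsLevel1) (hproper : 1 ≤ N.gallCount) :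
    (N.numVertices : ℤ) ≤ 3 * (Nat.card X : ℤ) - 2 ∧
    2 * (N.numArcs : ℤ) ≤ 7 * ((Nat.card X : ℤ) - 1) ∧
    (Nat.card X = 3 →
      (N.numVertices : ℤ) = 3 * (Nat.card X : ℤ) - 2 ∧
      2 * (N.numArcs : ℤ) = 7 * ((Nat.card X : ℤ) - 1) ∧
      N.IsSimple) := by
  classical
  haveI : Fintype N.V := Fintype.ofFinite _
  haveI : Finite X := Finite.of_injective N.leaf N.leaf_inj
  haveI : Fintype X := Fintype.ofFinite _
  have hb := hlev.1
  have hac := hb.1.1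
  have hleafiff := hb.1.2.1
  have hlin := hb.1.2.2.1
  obtain ⟨ρ, hρ0, hρ2, hreach⟩ := hb.1.2.2.2.1
  set n := Nat.card X with hndef
  set L := Finset.univ.filter (fun v => N.IsLeaf v) with hL
  set S2 := Finset.univ.filter (fun v : N.V => ¬ N.IsLeaf v ∧ N.outdeg v = 2) with hS2
  set H2 := Finset.univ.filter (fun v : N.V => N.indeg v = 2 ∧ N.outdeg v = 1) with hH2
  have hmemL : ∀ v, v ∈ L ↔ N.IsLeaf v := by intro v; simp [hL]
  have hmemS2 : ∀ v, v ∈ S2 ↔ (¬ N.IsLeaf v ∧ N.outdeg v = 2) := by intro v; simp [hS2]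
  have hmemH2 : ∀ v, v ∈ H2 ↔ (N.indeg v = 2 ∧ N.outdeg v = 1) := by intro v; simp [hH2]
  have hmemH2' : ∀ v, v ∈ H2 ↔ N.IsHybrid v := fun v =>
    (hmemH2 v).trans (Net.hybrid_iff hb v).symm
  have hleafdeg : ∀ v ∈ L, N.indeg v = 1 ∧ N.outdeg v = 0 := by
    intro v hv
    rw [hmemL] at hv
    rcases Net.classify hb v with h | h | h
    · exact h.2
    · exact absurd hv h.1
    · exact absurd hv h.1
  have hcover : L ∪ S2 ∪ H2 = Finset.univ := by
    ext v
    simp only [Finset.mem_union, Finset.mem_univ, iff_true]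
    rcases Net.classify hb v with h | h | h
    · exact Or.inl (Or.inl ((hmemL v).mpr h.1))
    · exact Or.inl (Or.inr ((hmemS2 v).mpr ⟨h.1, h.2.2⟩))
    · exact Or.inr ((hmemH2 v).mpr h.2)
  have hd1 : Disjoint L S2 := by
    rw [Finset.disjoint_left]
    intro v hv hv'
    exact ((hmemS2 v).mp hv').1 ((hmemL v).mp hv)
  have hd2 : Disjoint (L ∪ S2) H2 := by
    rw [Finset.disjoint_left]
    intro v hv hv'
    have h1 := (hmemH2 v).mp hv'
    rcases Finset.mem_union.mp hv with h | h
    · have := hleafdeg v h; omega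
    · have := (hmemS2 v).mp h; omega
  have hcardV : Fintype.card N.V = L.card + S2.card + H2.card := by
    rw [← Finset.card_univ, ← hcover, Finset.card_union_of_disjoint hd2,
      Finset.card_union_of_disjoint hd1]
  have hLcard : L.card = n := by
    rw [hndef, Nat.card_eq_fintype_card, ← Finset.card_univ]
    refine (Finset.card_bij (fun (x : X) _ => N.leaf x) ?_ ?_ ?_).symm
    · intro x _; rw [hmemL]; exact ⟨x, rfl⟩
    · intro x _ x' _ h; exact N.leaf_inj h
    · intro v hv
      obtain ⟨x, hx⟩ := (hmemL v).mp hv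
      exact ⟨x, Finset.mem_univ x, hx⟩
  have hgc : N.gallCount = H2.card := by
    rw [Net.gallCount, Set.ncard_eq_toFinset_card']
    congr 1
    ext v
    rw [Set.mem_toFinset, Set.mem_setOf_eq, hmemH2']
  have hsumsplit : ∀ f : N.V → ℕ, ∑ v : N.V, f v =
      (∑ v ∈ L, f v) + (∑ v ∈ S2, f v) + (∑ v ∈ H2, f v) := by
    intro f
    rw [show (Finset.univ : Finset N.V) = L ∪ S2 ∪ H2 from hcover.symm,
      Finset.sum_union hd2, Finset.sum_union hd1]
  have hsum_out : N.numArcs = 2 * S2.card + H2.card := by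
    rw [Net.numArcs_eq_sum_outdeg, hsumsplit]
    rw [Finset.sum_eq_zero (fun v hv => (hleafdeg v hv).2),
      Finset.sum_const_nat (fun v hv => ((hmemS2 v).mp hv).2),
      Finset.sum_const_nat (fun v hv => ((hmemH2 v).mp hv).2)]
    ring
  have hρS2 : ρ ∈ S2 := by
    rw [hmemS2]
    rcases Net.classify hb ρ with h | h | h
    · exfalso; rw [h.2.1] at hρ0; exact one_ne_zero hρ0
    · exact ⟨h.1, h.2.2⟩
    · exfalso; rw [h.2.1] at hρ0; exact two_ne_zero hρ0
  have hS2indeg : ∀ v ∈ S2, v ≠ ρ → N.indeg v = 1 := by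
    intro v hv hvρ
    have h1 := Net.indeg_pos_of_reach (N := N) hreach hvρ
    have h2 : N.indeg v ≤ 1 := by
      rcases Net.classify hb v with h | h | h
      · exact absurd h.1 ((hmemS2 v).mp hv).1
      · exact h.2.1
      · have := ((hmemS2 v).mp hv).2; omega
    omega
  have hS2sum : (∑ v ∈ S2, N.indeg v) + 1 = S2.card := by
    rw [← Finset.add_sum_erase _ _ hρS2, hρ0, zero_add,
      Finset.sum_const_nat (fun v hv =>
        hS2indeg v (Finset.mem_of_mem_erase hv) (Finset.ne_of_mem_erase hv)),
      Finset.card_erase_of_mem hρS2]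
    have : 1 ≤ S2.card := Finset.card_pos.mpr ⟨ρ, hρS2⟩
    omega
  have hsum_in : N.numArcs + 1 = n + S2.card + 2 * H2.card := by
    rw [Net.numArcs_eq_sum_indeg, hsumsplit]
    rw [Finset.sum_const_nat (fun v hv => (hleafdeg v hv).1),
      Finset.sum_const_nat (fun v hv => ((hmemH2 v).mp hv).1)]
    rw [hLcard] at *
    omega
  -- gall machinery
  have hGall : ∀ v : N.V, N.IsHybrid v →
      ∃ (o : N.V) (W : N.ugraph.Walk o o), W.IsCycle ∧ v ∈ W.support :=
    fun v hv => Net.exists_gall hlev hv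
  choose! go gW hWcyc hWmem using hGall
  set SF : N.V → Finset N.V := fun v => ((gW v).support.toFinset.erase v) with hSF
  have hSFcard : ∀ v ∈ H2, 3 ≤ (SF v).card := by
    intro v hv
    have hhy := (hmemH2' v).mp hv
    have h4 := Net.cycle_support_card hlev (hWcyc v hhy)
    have hvmem : v ∈ (gW v).support.toFinset := List.mem_toFinset.mpr (hWmem v hhy)
    have hc := Finset.card_erase_of_mem hvmem
    have hgoal : 3 ≤ ((gW v).support.toFinset.erase v).card := by omega
    simpa [hSF] using hgoal
  have hSFsub : ∀ v ∈ H2, SF v ⊆ S2 := by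
    intro v hv z hz
    have hhy := (hmemH2' v).mp hv
    have hzne : z ≠ v := Finset.ne_of_mem_erase hz
    have hzsupp : z ∈ (gW v).support := List.mem_toFinset.mp (Finset.mem_of_mem_erase hz)
    have hznl : ¬ N.IsLeaf z := Net.not_leaf_of_on_cycle hlev (hWcyc v hhy) hzsupp
    have hznh : ¬ N.IsHybrid z := fun hzh =>
      hzne (hlev.2.2 _ _ (hWcyc v hhy) z hzsupp v (hWmem v hhy) hzh hhy)
    rw [hmemS2]
    rcases Net.classify hb z with h | h | h
    · exact absurd h.1 hznl
    · exact ⟨h.1, h.2.2⟩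
    · exact absurd ((Net.hybrid_iff hb z).mpr h.2) hznh
  have hSFdisj : ∀ v ∈ H2, ∀ v' ∈ H2, v ≠ v' → Disjoint (SF v) (SF v') := by
    intro v hv v' hv' hne
    rw [Finset.disjoint_left]
    intro z hz hz'
    exact Net.gall_disjoint hlev (hWcyc v ((hmemH2' v).mp hv)) (hWcyc v' ((hmemH2' v').mp hv'))
      (hWmem v ((hmemH2' v).mp hv)) (hWmem v' ((hmemH2' v').mp hv'))
      ((hmemH2' v).mp hv) ((hmemH2' v').mp hv') hne
      (List.mem_toFinset.mp (Finset.mem_of_mem_erase hz))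
      (List.mem_toFinset.mp (Finset.mem_of_mem_erase hz'))
  have h3h : 3 * H2.card ≤ S2.card := by
    have hbU : (H2.biUnion SF) ⊆ S2 := Finset.biUnion_subset.mpr hSFsub
    have hcardU : (H2.biUnion SF).card = ∑ v ∈ H2, (SF v).card :=
      Finset.card_biUnion hSFdisj
    have hge : ∑ v ∈ H2, 3 ≤ ∑ v ∈ H2, (SF v).card := Finset.sum_le_sum hSFcard
    rw [Finset.sum_const, smul_eq_mul] at hge
    have := Finset.card_le_card hbU
    omega
  have eV : N.numVertices = n + S2.card + H2.card := by
    rw [Net.numVertices, Nat.card_eq_fintype_card, hcardV, hLcard]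
  have ehp : 1 ≤ H2.card := by rwa [hgc] at hproper
  have hn3 : 3 ≤ n := hn
  refine ⟨?_, ?_, ?_⟩
  · rw [eV]; push_cast; omega
  · rw [hsum_out]; push_cast; omega
  · intro hn3'
    have hneq : n = 3 := hn3'
    have hh1 : H2.card = 1 := by omega
    refine ⟨by rw [eV]; push_cast; omega, by rw [hsum_out]; push_cast; omega, ?_, ?_⟩
    · rw [hgc]; exact hh1
    · intro x u harc
      have hu_out : 1 ≤ N.outdeg u := Net.outdeg_pos_of_arc harc
      have hu_nl : ¬ N.IsLeaf u := by
        intro hlf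
        have := (hleafiff u).mpr hlf
        omega
      obtain ⟨v0, hv0⟩ := Finset.card_eq_one.mp hh1
      have hv0mem : v0 ∈ H2 := by rw [hv0]; exact Finset.mem_singleton_self v0
      have hv0hy : N.IsHybrid v0 := (hmemH2' v0).mp hv0mem
      rcases Net.classify hb u with h | h | h
      · exact absurd h.1 hu_nl
      · have huS2 : u ∈ S2 := (hmemS2 u).mpr ⟨h.1, h.2.2⟩
        have hSFeq : SF v0 = S2 := by
          refine Finset.eq_of_subset_of_card_le (hSFsub v0 hv0mem) ?_
          have h3 := hSFcard v0 hv0mem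
          omega
        rw [← hSFeq] at huS2
        exact ⟨go v0, gW v0, hWcyc v0 hv0hy,
          List.mem_toFinset.mp (Finset.mem_of_mem_erase huS2)⟩
      · have huH2 : u ∈ H2 := (hmemH2 u).mpr h.2
        rw [hv0, Finset.mem_singleton] at huH2
        subst huH2
        exact ⟨go u, gW u, hWcyc u hv0hy, hWmem u hv0hy⟩
end Aux
end

section
/- Let N be a binary phylogenetic network on X and let (u,v) be a cut arc of N. Then the cluster C_N(v) is an SN-set of the triplet system R(N); that is, there is no triplet xy|z ∈ R(N) with x, z ∈ C_N(v) and y ∉ C_N(v). -/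
open Relation

section Stmt9Aux

open List

variable {X : Type} {N : Net X}

private lemma dipath_rtg {p : List N.V} {s t : N.V} (h : N.IsDiPath p s t) :
    Relation.ReflTransGen N.arc s t := by
  obtain ⟨hc, hh, hl, -⟩ := h
  cases p with
  | nil => simp at hh
  | cons x l =>
    have hx : x = s := by simpa using hh
    subst hx
    have hne : (x :: l) ≠ [] := by simp
    have hlast : (x :: l).getLast hne = t := by
      have := List.getLast?_eq_getLast (l := x :: l) hne
      rw [this] at hl
      exact Option.some.inj hl
    exact List.relationReflTransGen_of_exists_isChain_cons l hc hlast

end Stmt9Aux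

/-- if `(u,v)` is a cut arc of a binary phylogenetic network `N`, then
the cluster `C_N(v)` is an SN-set of `R(N)`. -/
theorem stmt9 {X : Type} (N : Net X) (hbin : N.IsBinary)
    (u v : N.V) (hcut : N.CutArc u v) :
    N.IsSNSet (N.cluster v) := by
  classical
  obtain ⟨hphy, -⟩ := hbin
  obtain ⟨hacyc, hleaf, -, ⟨ρ, -, -, hρall⟩, -⟩ := hphy
  obtain ⟨harc, hdisc⟩ := hcut
  set G := N.ugraph.deleteEdges {s(u, v)} with hG
  have hnoloop : ∀ w, ¬ N.arc w w := fun w h => hacyc w (Relation.TransGen.single h)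
  have hadj : ∀ a b, N.arc a b → N.ugraph.Adj a b := fun a b h =>
    show a ≠ b ∧ (N.arc a b ∨ N.arc b a) from ⟨fun he => hnoloop a (he ▸ h), Or.inl h⟩
  have hnvu : ¬ N.arc v u := fun h =>
    hacyc u (Relation.TransGen.head harc (Relation.TransGen.single h))
  -- v is not reachable from u in the deleted graph
  have hvu : ¬ G.Reachable v u := by
    intro hr
    apply hdisc
    rw [SimpleGraph.connected_iff]
    refine ⟨?_, ⟨v⟩⟩
    have key : ∀ x y : N.V, N.ugraph.Reachable x y → G.Reachable x y := by
      intro x y hxy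
      obtain ⟨p⟩ := hxy
      induction p with
      | nil => exact SimpleGraph.Reachable.refl _
      | @cons a b c h' q ih =>
        by_cases he : s(a, b) = s(u, v)
        · rcases Sym2.eq_iff.mp he with ⟨he1, he2⟩ | ⟨he1, he2⟩
          · rw [he1]; rw [he2] at ih; exact hr.symm.trans ih
          · rw [he1]; rw [he2] at ih; exact hr.trans ih
        · have hGadj : G.Adj a b := by
            rw [hG, SimpleGraph.deleteEdges_adj]
            exact ⟨h', by simpa using he⟩
          exact hGadj.reachable.trans ih
    intro x y
    have hx : N.ugraph.Reachable ρ x := by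
      have hrx := hρall x
      induction hrx with
      | refl => exact SimpleGraph.Reachable.refl _
      | tail _ h2 ih => exact ih.trans (hadj _ _ h2).reachable
    have hy : N.ugraph.Reachable ρ y := by
      have hry := hρall y
      induction hry with
      | refl => exact SimpleGraph.Reachable.refl _
      | tail _ h2 ih => exact ih.trans (hadj _ _ h2).reachable
    exact key x y (hx.symm.trans hy)
  -- descendants of v are in the component of v
  have descend : ∀ w, Relation.ReflTransGen N.arc v w → G.Reachable v w := by
    intro w hw
    induction hw with
    | refl => exact SimpleGraph.Reachable.refl _
    | @tail b c h1 h2 ih =>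
      by_cases he : s(b, c) = s(u, v)
      · rcases Sym2.eq_iff.mp he with ⟨he1, he2⟩ | ⟨he1, he2⟩
        · rw [he1] at h1; exact absurd (Relation.TransGen.tail' h1 harc) (hacyc v)
        · rw [he1, he2] at h2; exact absurd h2 hnvu
      · have hGadj : G.Adj b c := by
          rw [hG, SimpleGraph.deleteEdges_adj]
          exact ⟨hadj _ _ h2, by simpa using he⟩
        exact ih.trans hGadj.reachable
  -- arcs starting in the component of v stay in it
  have arcA : ∀ a b, N.arc a b → G.Reachable v a → G.Reachable v b := by
    intro a b hab ha
    by_cases he : s(a, b) = s(u, v)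
    · rcases Sym2.eq_iff.mp he with ⟨he1, he2⟩ | ⟨he1, he2⟩
      · rw [he2]
      · rw [he1, he2] at hab; exact absurd hab hnvu
    · have hGadj : G.Adj a b := by
        rw [hG, SimpleGraph.deleteEdges_adj]
        exact ⟨hadj _ _ hab, by simpa using he⟩
      exact ha.trans hGadj.reachable
  have reachA : ∀ a b, Relation.ReflTransGen N.arc a b → G.Reachable v a → G.Reachable v b := by
    intro a b hab ha
    induction hab with
    | refl => exact ha
    | tail _ h2 ih => exact arcA _ _ h2 ih
  -- the unique arc crossing into the component of v is (u,v)
  have cross : ∀ a b, N.arc a b → ¬ G.Reachable v a → G.Reachable v b → b = v := by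
    intro a b hab ha hb
    by_cases he : s(a, b) = s(u, v)
    · rcases Sym2.eq_iff.mp he with ⟨he1, he2⟩ | ⟨he1, he2⟩
      · exact he2
      · rw [he1] at ha; exact absurd (SimpleGraph.Reachable.refl _) ha
    · have hGadj : G.Adj a b := by
        rw [hG, SimpleGraph.deleteEdges_adj]
        exact ⟨hadj _ _ hab, by simpa using he⟩
      exact absurd (hb.trans hGadj.symm.reachable) ha
  have hρB : ¬ G.Reachable v ρ := fun h => hvu (reachA ρ u (hρall u) h)
  -- crossing in terms of ReflTransGen
  have crossRTG : ∀ s t : N.V, Relation.ReflTransGen N.arc s t →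
      G.Reachable v t → ¬ G.Reachable v s → Relation.ReflTransGen N.arc v t := by
    intro s t hst
    induction hst using Relation.ReflTransGen.head_induction_on with
    | refl => intro ht hs; exact absurd ht hs
    | @head a' c' h' h ih =>
      intro ht hs
      by_cases hm : G.Reachable v c'
      · have hcv : c' = v := cross _ _ h' hs hm
        rw [hcv] at h
        exact h
      · exact ih ht hm
  -- the component of v consists exactly of the descendants of v
  have compA : ∀ t, G.Reachable v t → Relation.ReflTransGen N.arc v t := by
    intro t ht
    exact crossRTG ρ t (hρall t) ht hρB
  -- a directed path crossing into the component of v passes through v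
  have memv : ∀ p : List N.V, p.Chain' N.arc → ∀ s t, p.head? = some s → p.getLast? = some t →
      ¬ G.Reachable v s → G.Reachable v t → v ∈ p := by
    intro p
    induction p with
    | nil => intro _ s t h; simp at h
    | cons x l ih =>
      intro hc s t hh hl hs ht
      have hx : x = s := by simpa using hh
      subst hx
      cases l with
      | nil =>
        have : x = t := by simpa using hl
        subst this
        exact absurd ht hs
      | cons y m =>
        have harcxy : N.arc x y := (List.isChain_cons_cons.mp hc).1
        by_cases hy : G.Reachable v y
        · have hyv : y = v := cross x y harcxy hs hy
          simp [hyv]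
        · have hl' : (y :: m).getLast? = some t := by
            rwa [List.getLast?_cons_cons] at hl
          exact List.mem_cons_of_mem _
            (ih (List.isChain_cons_cons.mp hc).2 y t rfl hl' hy ht)
  -- leaves have no out-arcs
  have noarc_of_leaf : ∀ z, N.IsLeaf z → ∀ y, ¬ N.arc z y := by
    intro z hz y hzy
    have h0 : N.outdeg z = 0 := (hleaf z).mpr hz
    have hemp : {w | N.arc z w} = ∅ := (Set.ncard_eq_zero (Set.toFinite _)).mp h0
    have : y ∈ ({w | N.arc z w} : Set N.V) := hzy
    rw [hemp] at this
    exact this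
  -- a non-final vertex of a directed path has an out-arc
  have succ : ∀ p : List N.V, p.Chain' N.arc → ∀ t, p.getLast? = some t →
      ∀ z ∈ p, z ≠ t → ∃ y, N.arc z y := by
    intro p
    induction p with
    | nil => intro _ t _ z hz; simp at hz
    | cons x l ih =>
      intro hc t hl z hz hzt
      cases l with
      | nil =>
        have hxt : x = t := by simpa using hl
        have hzx : z = x := by simpa using hz
        exact absurd (hzx.trans hxt) hzt
      | cons y m =>
        rcases List.mem_cons.mp hz with rfl | hz'
        · exact ⟨y, (List.isChain_cons_cons.mp hc).1⟩
        · exact ih (List.isChain_cons_cons.mp hc).2 t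
            (by rwa [List.getLast?_cons_cons] at hl) z hz' hzt
  -- a non-extremal vertex of a path is interior
  have hint : ∀ (p : List N.V) (s t z : N.V), p.head? = some s → p.getLast? = some t →
      z ∈ p → z ≠ s → z ≠ t → z ∈ listInterior p := by
    intro p s t z hh hl hz hzs hzt
    cases p with
    | nil => simp at hz
    | cons x l =>
      have hx : x = s := by simpa using hh
      subst hx
      have hz' : z ∈ l := by
        rcases List.mem_cons.mp hz with rfl | h
        · exact absurd rfl hzs
        · exact h
      have hlne : l ≠ [] := List.ne_nil_of_mem hz'
      have hlast : l.getLast hlne = t := by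
        have h1 : (x :: l).getLast (by simp) = t := by
          have := List.getLast?_eq_getLast (l := x :: l) (by simp)
          rw [this] at hl
          exact Option.some.inj hl
        rwa [List.getLast_cons hlne] at h1
      have hsplit := List.dropLast_append_getLast hlne
      have hz'' : z ∈ l.dropLast ++ [l.getLast hlne] := by rw [hsplit]; exact hz'
      rcases List.mem_append.mp hz'' with h | h
      · simpa [listInterior] using h
      · have : z = l.getLast hlne := by simpa using h
        exact absurd (this.trans hlast) hzt
  -- main argument
  intro a b c hcons ha hc
  by_contra hb
  obtain ⟨hab, hac, hbc, v', w, hvw', p₁, p₂, p₃, p₄, h1, h2, h3, h4, hpw⟩ := hcons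
  have hAa : G.Reachable v (N.leaf a) := descend _ ha
  have hAc : G.Reachable v (N.leaf c) := descend _ hc
  have hBb : ¬ G.Reachable v (N.leaf b) := fun h => hb (compA _ h)
  have hwB : ¬ G.Reachable v w := fun h => hBb (reachA w _ (dipath_rtg h4) h)
  have hv'B : ¬ G.Reachable v v' := fun h => hwB (reachA v' w (dipath_rtg h2) h)
  have hvp1 : v ∈ p₁ := memv p₁ h1.1 v' (N.leaf c) h1.2.1 h1.2.2.1 hv'B hAc
  have hvp3 : v ∈ p₃ := memv p₃ h3.1 w (N.leaf a) h3.2.1 h3.2.2.1 hwB hAa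
  have hvnv' : v ≠ v' := fun h => hv'B (h ▸ SimpleGraph.Reachable.refl v)
  have hvnw : v ≠ w := fun h => hwB (h ▸ SimpleGraph.Reachable.refl v)
  by_cases hvla : v = N.leaf a
  · -- then v is a leaf; on p₁ it is not the last vertex, so it has an out-arc
    have hvnc : v ≠ N.leaf c := fun h => hac (N.leaf_inj (hvla.symm.trans h))
    obtain ⟨y, hy⟩ := succ p₁ h1.1 (N.leaf c) h1.2.2.1 v hvp1 hvnc
    exact noarc_of_leaf v ⟨a, hvla.symm⟩ y hy
  · by_cases hvlc : v = N.leaf c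
    · have hvna : v ≠ N.leaf a := hvla
      obtain ⟨y, hy⟩ := succ p₃ h3.1 (N.leaf a) h3.2.2.1 v hvp3 hvna
      exact noarc_of_leaf v ⟨c, hvlc.symm⟩ y hy
    · have hi1 : v ∈ listInterior p₁ := hint p₁ v' (N.leaf c) v h1.2.1 h1.2.2.1 hvp1 hvnv' hvlc
      have hi3 : v ∈ listInterior p₃ := hint p₃ w (N.leaf a) v h3.2.1 h3.2.2.1 hvp3 hvnw hvla
      have hd := (List.pairwise_cons.mp hpw).1 p₃ (by simp)
      exact hd v hi1 hi3
end

section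
/- Let N and N' be binary level-1 networks on the same leaf set of size n ≥ 3 such that R(N) ⊆ R(N'). Let v be a split vertex of N that is the head of a cut arc of N, and v' a split vertex of N' that is the head of a cut arc of N'. Then the clusters C_N(v) and C_{N'}(v') are compatible, i.e. their intersection is empty or equals one of the two. -/
open Relation

open Relation List

section AuxList
variable {α : Type*} {r : α → α → Prop}

instance : IsTrans α (TransGen r) := ⟨fun _ _ _ => TransGen.trans⟩

lemma pairwise_of_chain' (hac : ∀ x, ¬ TransGen r x x) {p : List α}
    (hp : p.Chain' r) : p.Pairwise (TransGen r) :=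
  List.isChain_iff_pairwise.1 (hp.imp fun _ _ h => TransGen.single h)

lemma nodup_of_chain' (hac : ∀ x, ¬ TransGen r x x) {p : List α}
    (hp : p.Chain' r) : p.Nodup := by
  refine (pairwise_of_chain' hac hp).imp ?_
  intro a b hab he
  exact hac a (he ▸ hab)

lemma mem_first_rel {p : List α} (hp : p.Pairwise r) {s z : α}
    (hs : p.head? = some s) (hz : z ∈ p) : z = s ∨ r s z := by
  cases p with
  | nil => simp at hz
  | cons a q =>
    simp at hs; subst hs
    rcases List.mem_cons.1 hz with rfl | hz
    · exact Or.inl rfl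
    · exact Or.inr ((List.pairwise_cons.1 hp).1 z hz)

lemma mem_of_getLast?_eq {p : List α} {t : α} (ht : p.getLast? = some t) : t ∈ p := by
  obtain ⟨h, rfl⟩ := List.mem_getLast?_eq_getLast (Option.mem_def.2 ht)
  exact List.getLast_mem h

lemma mem_last_rel {p : List α} (hp : p.Pairwise r) {t z : α}
    (ht : p.getLast? = some t) (hz : z ∈ p) : z = t ∨ r z t := by
  induction p with
  | nil => simp at hz
  | cons a q ih =>
    cases q with
    | nil =>
      simp at ht hz; subst ht; exact Or.inl hz
    | cons b q' =>
      rw [List.getLast?_cons_cons] at ht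
      rcases List.mem_cons.1 hz with rfl | hz
      · exact Or.inr ((List.pairwise_cons.1 hp).1 t (mem_of_getLast?_eq ht))
      · exact ih (List.pairwise_cons.1 hp).2 ht hz

lemma dropLast_rel_last {p : List α} (hp : p.Pairwise r) {t z : α}
    (ht : p.getLast? = some t) (hz : z ∈ p.dropLast) : r z t := by
  have hq : p ≠ [] := by rintro rfl; simp at ht
  have hdec := List.dropLast_append_getLast hq
  have h2 : p.getLast hq = t := by
    rw [List.getLast?_eq_getLast_of_ne_nil hq] at ht; injection ht
  rw [← hdec] at hp
  exact h2 ▸ ((List.pairwise_append.1 hp).2.2 z hz _ (by simp))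

/-- interior membership from membership, distinct from both ends -/
lemma mem_interior_of {p : List α} {s t z : α} (hs : p.head? = some s)
    (ht : p.getLast? = some t) (hz : z ∈ p) (hzs : z ≠ s) (hzt : z ≠ t) :
    z ∈ p.tail.dropLast := by
  cases p with
  | nil => simp at hz
  | cons a q =>
    simp at hs; subst hs
    rcases List.mem_cons.1 hz with rfl | hz
    · exact absurd rfl hzs
    have hq : q ≠ [] := List.ne_nil_of_mem hz
    have hql : q.getLast? = some t := by
      cases q with
      | nil => simp at hz
      | cons b q' => rwa [List.getLast?_cons_cons] at ht
    show z ∈ q.dropLast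
    have hdec := List.dropLast_append_getLast hq
    rw [List.getLast?_eq_getLast_of_ne_nil hq] at hql
    have hqt : q.getLast hq = t := by injection hql
    rw [← hdec] at hz
    rcases List.mem_append.1 hz with h | h
    · exact h
    · simp at h; exact absurd (h.trans hqt) hzt

lemma mem_of_mem_interior {p : List α} {z : α} (hz : z ∈ p.tail.dropLast) : z ∈ p :=
  (List.tail_sublist p).subset ((List.dropLast_sublist _).subset hz)

lemma interior_rel {p : List α} (hp : p.Pairwise r) {s t z : α} (hs : p.head? = some s)
    (ht : p.getLast? = some t) (hz : z ∈ p.tail.dropLast) : r s z ∧ r z t := by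
  cases p with
  | nil => simp at hs
  | cons a q =>
    simp at hs; subst hs
    have hzq : z ∈ q := (List.dropLast_sublist _).subset hz
    have hq : q ≠ [] := List.ne_nil_of_mem hzq
    have hql : q.getLast? = some t := by
      cases q with
      | nil => simp at hzq
      | cons b q' => rwa [List.getLast?_cons_cons] at ht
    exact ⟨(List.pairwise_cons.1 hp).1 z hzq,
      dropLast_rel_last (List.pairwise_cons.1 hp).2 hql hz⟩

end AuxList

section NetAux
open Relation
variable {X : Type} {N : Net X}

namespace Net

lemma IsDiPath.pairwise {p : List N.V} {s t : N.V} (h : N.IsDiPath p s t) :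
    p.Pairwise (TransGen N.arc) :=
  List.isChain_iff_pairwise.1 (h.1.imp fun _ _ hh => TransGen.single hh)

lemma IsDiPath.rtg_of_mem {p : List N.V} {s t z : N.V} (h : N.IsDiPath p s t) (hz : z ∈ p) :
    ReflTransGen N.arc s z ∧ ReflTransGen N.arc z t := by
  constructor
  · rcases mem_first_rel h.pairwise h.2.1 hz with rfl | hh
    · exact ReflTransGen.refl
    · exact hh.to_reflTransGen
  · rcases mem_last_rel h.pairwise h.2.2.1 hz with rfl | hh
    · exact ReflTransGen.refl
    · exact hh.to_reflTransGen

lemma IsDiPath.rtg {p : List N.V} {s t : N.V} (h : N.IsDiPath p s t) :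
    ReflTransGen N.arc s t := by
  have hs : s ∈ p := by
    cases p with
    | nil => simp [IsDiPath] at h
    | cons a q => have := h.2.1; simp at this; subst this; exact List.mem_cons_self
  exact (h.rtg_of_mem hs).2

lemma IsDiPath.interior_trans {p : List N.V} {s t z : N.V} (h : N.IsDiPath p s t)
    (hz : z ∈ listInterior p) :
    TransGen N.arc s z ∧ TransGen N.arc z t :=
  interior_rel h.pairwise h.2.1 h.2.2.1 hz

lemma exists_dipath (hac : ∀ x, ¬ TransGen N.arc x x) {s t : N.V}
    (h : ReflTransGen N.arc s t) : ∃ p, N.IsDiPath p s t := by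
  induction h using ReflTransGen.head_induction_on with
  | refl => exact ⟨[t], List.isChain_singleton _, rfl, rfl, List.nodup_singleton _⟩
  | head harc hrt ih =>
    rename_i a c
    obtain ⟨p, hc, hh, hl, _⟩ := ih
    have hpne : p ≠ [] := by rintro rfl; simp at hh
    refine ⟨a :: p, ?_, rfl, ?_, ?_⟩
    · refine List.isChain_cons.2 ⟨?_, hc⟩
      intro y hy
      rw [hh] at hy; injection hy with hy; exact hy ▸ harc
    · cases p with
      | nil => exact absurd rfl hpne
      | cons b q => rwa [List.getLast?_cons_cons]
    · exact nodup_of_chain' hac (List.isChain_cons.2 ⟨fun y hy => by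
        rw [hh] at hy; injection hy with hy; exact hy ▸ harc, hc⟩)

lemma exists_max (hac : ∀ x, ¬ TransGen N.arc x x) {S : Set N.V} (hS : S.Nonempty) :
    ∃ w ∈ S, ∀ z ∈ S, ¬ TransGen N.arc w z := by
  haveI : IsTrans N.V (flip (TransGen N.arc)) := ⟨fun _ _ _ h1 h2 => TransGen.trans h2 h1⟩
  haveI : IsIrrefl N.V (flip (TransGen N.arc)) := ⟨fun a => hac a⟩
  obtain ⟨w, hw, hmin⟩ :=
    (Finite.wellFounded_of_trans_of_irrefl (flip (TransGen N.arc))).has_min S hS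
  exact ⟨w, hw, fun z hz => hmin z hz⟩

lemma leaf_no_arc (hphy : N.IsPhylo) (x : X) (y : N.V) : ¬ N.arc (N.leaf x) y := by
  have h0 : N.outdeg (N.leaf x) = 0 := (hphy.2.1 _).2 ⟨x, rfl⟩
  intro h
  have he : ({w | N.arc (N.leaf x) w} : Set N.V) = ∅ :=
    (Set.ncard_eq_zero (Set.toFinite _)).1 h0
  have : y ∈ ({w | N.arc (N.leaf x) w} : Set N.V) := h
  rw [he] at this
  exact this

lemma ne_leaf_of_outdeg (hphy : N.IsPhylo) {v : N.V} (hv : 2 ≤ N.outdeg v) (x : X) :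
    v ≠ N.leaf x := by
  rintro rfl
  rw [(hphy.2.1 _).2 ⟨x, rfl⟩] at hv
  omega


lemma pairwise4 {α : Type*} {R : α → α → Prop} {a b c d : α} :
    List.Pairwise R [a, b, c, d] ↔ R a b ∧ R a c ∧ R a d ∧ R b c ∧ R b d ∧ R c d := by
  simp [List.pairwise_cons]; tauto

section Cut

lemma adj' (hac : ∀ x, ¬ TransGen N.arc x x) {u v : N.V} (huv : N.arc u v)
    {x y : N.V} (hxy : N.arc x y) (hne : (x, y) ≠ (u, v)) :
    (N.ugraph.deleteEdges {s(u, v)}).Adj x y := by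
  refine SimpleGraph.deleteEdges_adj.2 ⟨⟨?_, Or.inl hxy⟩, ?_⟩
  · rintro rfl; exact hac x (TransGen.single hxy)
  · simp only [Set.mem_singleton_iff, Sym2.eq_iff]
    rintro (⟨rfl, rfl⟩ | ⟨rfl, rfl⟩)
    · exact hne rfl
    · exact hac x (TransGen.tail (TransGen.single hxy) huv)

lemma reach_aux (hac : ∀ x, ¬ TransGen N.arc x x) {u v : N.V} (huv : N.arc u v)
    {p : List N.V} (hp : p.Chain' N.arc) {s t : N.V}
    (hs : p.head? = some s) (hls : p.getLast? = some t) (hv : v ∉ p.tail) :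
    (N.ugraph.deleteEdges {s(u, v)}).Reachable s t := by
  induction p generalizing s with
  | nil => simp at hs
  | cons a q ih =>
    simp at hs; subst hs
    cases q with
    | nil =>
      simp at hls; exact hls ▸ SimpleGraph.Reachable.refl _
    | cons b q' =>
      have harc : N.arc a b := (List.isChain_cons_cons.1 hp).1
      have hvb : v ∉ b :: q' := hv
      have hne : (a, b) ≠ (u, v) := by
        intro he
        injection he with h1 h2
        exact hvb (h2 ▸ List.mem_cons_self)
      have hadj := adj' hac huv harc hne
      refine hadj.reachable.trans (ih (List.isChain_cons_cons.1 hp).2 rfl ?_ ?_)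
      · rwa [List.getLast?_cons_cons] at hls
      · intro hm
        exact hvb (List.mem_cons_of_mem _ hm)

lemma reach_below (hac : ∀ x, ¬ TransGen N.arc x x) {u v : N.V} (huv : N.arc u v) {x : N.V} (hx : ReflTransGen N.arc v x) :
    (N.ugraph.deleteEdges {s(u, v)}).Reachable v x := by
  obtain ⟨p, hp⟩ := exists_dipath hac hx
  cases p with
  | nil => simp [IsDiPath] at hp
  | cons a q =>
    have ha : a = v := by have := hp.2.1; simpa using this
    subst ha
    refine reach_aux hac huv hp.1 hp.2.1 hp.2.2.1 ?_
    intro hm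
    exact (List.nodup_cons.1 hp.2.2.2).1 hm

lemma reach_above (hac : ∀ x, ¬ TransGen N.arc x x) {u v ρ : N.V} (hρ : ∀ w, ReflTransGen N.arc ρ w) (huv : N.arc u v) {x : N.V} (hx : ¬ ReflTransGen N.arc v x) :
    (N.ugraph.deleteEdges {s(u, v)}).Reachable ρ x := by
  obtain ⟨p, hp⟩ := exists_dipath hac (hρ x)
  refine reach_aux hac huv hp.1 hp.2.1 hp.2.2.1 ?_
  intro hm
  exact hx (hp.rtg_of_mem ((List.tail_sublist p).subset hm)).2

lemma not_reach_root (hac : ∀ x, ¬ TransGen N.arc x x) {u v ρ : N.V} (hρ : ∀ w, ReflTransGen N.arc ρ w) (hcut : N.CutArc u v) :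
    ¬ (N.ugraph.deleteEdges {s(u, v)}).Reachable ρ v := by
  intro h
  apply hcut.2
  rw [SimpleGraph.connected_iff]
  refine ⟨?_, ⟨ρ⟩⟩
  have key : ∀ z, (N.ugraph.deleteEdges {s(u, v)}).Reachable ρ z := by
    intro z
    by_cases hz : ReflTransGen N.arc v z
    · exact h.trans (reach_below hac hcut.1 hz)
    · exact reach_above hac hρ hcut.1 hz
  exact fun x y => (key x).symm.trans (key y)

lemma crossing (hac : ∀ x, ¬ TransGen N.arc x x) {u v ρ : N.V} (hρ : ∀ w, ReflTransGen N.arc ρ w) (hcut : N.CutArc u v) {p : List N.V} {s t : N.V}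
    (hdp : N.IsDiPath p s t) (hns : ¬ ReflTransGen N.arc v s)
    (hnt : ReflTransGen N.arc v t) : v ∈ p := by
  induction p generalizing s with
  | nil => simp [IsDiPath] at hdp
  | cons a q ih =>
    have ha : a = s := by have := hdp.2.1; simpa using this
    subst ha
    cases q with
    | nil =>
      have h0 : a = t := by have := hdp.2.2.1; simpa using this
      exact absurd (h0 ▸ hnt) hns
    | cons b q' =>
      have harc : N.arc a b := (List.isChain_cons_cons.1 hdp.1).1
      by_cases hvb : v = b
      · exact hvb ▸ List.mem_cons_of_mem _ (List.mem_cons_self)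
      have hnb : ¬ ReflTransGen N.arc v b := by
        intro hvb'
        have hne : (a, b) ≠ (u, v) := by
          intro he; injection he with h1 h2; exact hvb h2.symm
        have hadj := adj' hac hcut.1 harc hne
        exact not_reach_root hac hρ hcut
          (((reach_above hac hρ hcut.1 hns).trans hadj.reachable).trans
            (reach_below hac hcut.1 hvb').symm)
      have hdp' : N.IsDiPath (b :: q') b t := by
        refine ⟨(List.isChain_cons_cons.1 hdp.1).2, rfl, ?_, (List.nodup_cons.1 hdp.2.2.2).2⟩
        have := hdp.2.2.1; rwa [List.getLast?_cons_cons] at this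
      exact List.mem_cons_of_mem _ (ih hdp' hnb)

end Cut

lemma consistent_symm {a b c : X} (h : N.Consistent a b c) : N.Consistent b a c := by
  obtain ⟨hab, hac', hbc, v, w, hvw, p₁, p₂, p₃, p₄, h1, h2, h3, h4, hpw⟩ := h
  obtain ⟨d12, d13, d14, d23, d24, d34⟩ := pairwise4.1 hpw
  refine ⟨hab.symm, hbc, hac', v, w, hvw, p₁, p₂, p₄, p₃, h1, h2, h4, h3, ?_⟩
  exact pairwise4.2 ⟨d12, d14, d13, d24, d23, fun z hz hz' => d34 z hz' hz⟩

/-- no triplet `xy|c` when `x, c` lie below the head `v` of a cut arc (with out-degree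
at least 2) and `y` does not. -/
lemma no_triplet {u v : N.V} (hphy : N.IsPhylo) (hcut : N.CutArc u v)
    (hout : 2 ≤ N.outdeg v) {x y c : X}
    (hx : x ∈ N.cluster v) (hy : y ∉ N.cluster v) (hcc : c ∈ N.cluster v) :
    ¬ N.Consistent x y c := by
  rintro ⟨-, -, -, v₀, w, hvw, p₁, p₂, p₃, p₄, h1, h2, h3, h4, hpw⟩
  have hac : ∀ z, ¬ TransGen N.arc z z := hphy.1
  obtain ⟨ρ, -, -, hρ⟩ := hphy.2.2.2.1
  have hnw : ¬ ReflTransGen N.arc v w := fun h => hy (h.trans h4.rtg)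
  have hnv₀ : ¬ ReflTransGen N.arc v v₀ := fun h => hy ((h.trans h2.rtg).trans h4.rtg)
  have hv3 : v ∈ p₃ := crossing hac hρ hcut h3 hnw hx
  have hv1 : v ∈ p₁ := crossing hac hρ hcut h1 hnv₀ hcc
  have hvnew : v ≠ w := by rintro rfl; exact hnw ReflTransGen.refl
  have hvnev₀ : v ≠ v₀ := by rintro rfl; exact hnv₀ ReflTransGen.refl
  have int3 : v ∈ listInterior p₃ :=
    mem_interior_of h3.2.1 h3.2.2.1 hv3 hvnew (ne_leaf_of_outdeg hphy hout x)
  have int1 : v ∈ listInterior p₁ :=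
    mem_interior_of h1.2.1 h1.2.2.1 hv1 hvnev₀ (ne_leaf_of_outdeg hphy hout c)
  exact (pairwise4.1 hpw).2.1 v int1 int3

/-- existence of the triplet `ab|c` when `a, b` lie below `v` and `c` does not. -/
lemma exists_triplet {v : N.V} (hphy : N.IsPhylo) {a b c : X}
    (ha : a ∈ N.cluster v) (hb : b ∈ N.cluster v) (hc : c ∉ N.cluster v)
    (hab : a ≠ b) : N.Consistent a b c := by
  have hac : ∀ z, ¬ TransGen N.arc z z := hphy.1
  obtain ⟨ρ, -, -, hρ⟩ := hphy.2.2.2.1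
  -- maximal w below v from which both a and b are reachable
  obtain ⟨w, ⟨hwv, hwa, hwb⟩, hwmax⟩ :=
    exists_max (S := {z | ReflTransGen N.arc v z ∧ ReflTransGen N.arc z (N.leaf a) ∧
      ReflTransGen N.arc z (N.leaf b)}) hac ⟨v, ReflTransGen.refl, ha, hb⟩
  -- maximal v₀ from which both w and c are reachable
  obtain ⟨v₀, ⟨h0w, h0c⟩, h0max⟩ :=
    exists_max (S := {z | ReflTransGen N.arc z w ∧ ReflTransGen N.arc z (N.leaf c)})
      hac ⟨ρ, hρ w, hρ (N.leaf c)⟩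
  have hane : a ≠ c := by rintro rfl; exact hc ha
  have hbne : b ≠ c := by rintro rfl; exact hc hb
  have hv₀w : v₀ ≠ w := by
    rintro rfl
    exact hc (hwv.trans h0c)
  obtain ⟨p₁, hp₁⟩ := exists_dipath hac h0c
  obtain ⟨p₂, hp₂⟩ := exists_dipath hac h0w
  obtain ⟨p₃, hp₃⟩ := exists_dipath hac hwa
  obtain ⟨p₄, hp₄⟩ := exists_dipath hac hwb
  refine ⟨hab, hane, hbne, v₀, w, hv₀w, p₁, p₂, p₃, p₄, hp₁, hp₂, hp₃, hp₄, ?_⟩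
  refine pairwise4.2 ⟨?_, ?_, ?_, ?_, ?_, ?_⟩
  · -- p₁ vs p₂ : maximality of v₀
    intro z hz1 hz2
    have t1 := hp₁.interior_trans hz1
    have t2 := hp₂.interior_trans hz2
    exact h0max z ⟨t2.2.to_reflTransGen, t1.2.to_reflTransGen⟩ t1.1
  · -- p₁ vs p₃ : c would be below v
    intro z hz1 hz3
    have t1 := hp₁.interior_trans hz1
    have t3 := hp₃.interior_trans hz3
    exact hc ((hwv.trans t3.1.to_reflTransGen).trans t1.2.to_reflTransGen)
  · -- p₁ vs p₄
    intro z hz1 hz4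
    have t1 := hp₁.interior_trans hz1
    have t4 := hp₄.interior_trans hz4
    exact hc ((hwv.trans t4.1.to_reflTransGen).trans t1.2.to_reflTransGen)
  · -- p₂ vs p₃ : acyclicity
    intro z hz2 hz3
    have t2 := hp₂.interior_trans hz2
    have t3 := hp₃.interior_trans hz3
    exact hac z (TransGen.trans t2.2 t3.1)
  · -- p₂ vs p₄
    intro z hz2 hz4
    have t2 := hp₂.interior_trans hz2
    have t4 := hp₄.interior_trans hz4
    exact hac z (TransGen.trans t2.2 t4.1)
  · -- p₃ vs p₄ : maximality of w
    intro z hz3 hz4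
    have t3 := hp₃.interior_trans hz3
    have t4 := hp₄.interior_trans hz4
    exact hwmax z ⟨hwv.trans t3.1.to_reflTransGen, t3.2.to_reflTransGen,
      t4.2.to_reflTransGen⟩ t3.1

end Net
end NetAux

/-- if `N, N'` are binary level-1 networks on the same leaf set of size
`n ≥ 3` with `R(N) ⊆ R(N')`, and `v, v'` are split vertices that are heads of cut arcs
of `N, N'` respectively, then `C_N(v)` and `C_{N'}(v')` are compatible. -/
theorem stmt10 {X : Type} (N N' : Net X) (hn : 3 ≤ Nat.card X)
    (hlev : N.IsLevel1) (hlev' : N'.IsLevel1)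
    (hsub : N.tripletSet ⊆ N'.tripletSet)
    (u v : N.V) (hcut : N.CutArc u v)
    (hsplit : N.indeg v = 1 ∧ 2 ≤ N.outdeg v)
    (u' v' : N'.V) (hcut' : N'.CutArc u' v')
    (hsplit' : N'.indeg v' = 1 ∧ 2 ≤ N'.outdeg v') :
    N.cluster v ∩ N'.cluster v' = ∅ ∨
    N.cluster v ∩ N'.cluster v' = N.cluster v ∨
    N.cluster v ∩ N'.cluster v' = N'.cluster v' := by
  by_contra hcon
  push_neg at hcon
  obtain ⟨h1, h2, h3⟩ := hcon
  obtain ⟨a, hav, hav'⟩ := h1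
  obtain ⟨b, hbv, hbI⟩ := Set.exists_of_ssubset
    (Set.ssubset_iff_subset_ne.2 ⟨Set.inter_subset_left, h2⟩)
  have hbv' : b ∉ N'.cluster v' := fun h => hbI ⟨hbv, h⟩
  obtain ⟨c, hcv', hcI⟩ := Set.exists_of_ssubset
    (Set.ssubset_iff_subset_ne.2 ⟨Set.inter_subset_right, h3⟩)
  have hcv : c ∉ N.cluster v := fun h => hcI ⟨h, hcv'⟩
  have hab : a ≠ b := fun h => hbv' (h ▸ hav')
  have htrip := Net.exists_triplet hlev.1.1 hav hbv hcv hab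
  have hmem : ((s(a, b), c) : Sym2 X × X) ∈ N.tripletSet := ⟨a, b, rfl, htrip⟩
  obtain ⟨a', b', hs, hcons⟩ := hsub hmem
  rcases Sym2.eq_iff.1 hs with ⟨rfl, rfl⟩ | ⟨heq1, heq2⟩
  · exact Net.no_triplet hlev'.1.1 hcut' hsplit'.2 hav' hbv' hcv' hcons
  · subst heq1; subst heq2
    exact Net.no_triplet hlev'.1.1 hcut' hsplit'.2 hav' hbv' hcv'
      (Net.consistent_symm hcons)
end

section
/- Let N and N' be binary level-1 networks on the same leaf set with R(N) ⊆ R(N'), and let v, v' be split vertices of N, N' respectively, heads of cut arcs, such that C_N(v) ⊊ C_{N'}(v'). Then C_N(v) is not a maximal SN-set of R(N). -/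
open Relation

section StmtAux

open Relation

namespace Net

variable {X : Type} {M : Net X}

/-- The set of (weak) descendants of a vertex. -/
def desc (M : Net X) (d : M.V) : Set M.V := {z | Relation.ReflTransGen M.arc d z}

lemma desc_self (d : M.V) : d ∈ M.desc d := Relation.ReflTransGen.refl

lemma desc_closed {d b c : M.V} (hb : b ∈ M.desc d) (h : M.arc b c) :
    c ∈ M.desc d := Relation.ReflTransGen.tail hb h

lemma desc_closed_rtg {d b c : M.V} (hb : b ∈ M.desc d)
    (h : Relation.ReflTransGen M.arc b c) : c ∈ M.desc d := hb.trans h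

lemma parent_not_mem_desc (hac : ∀ w, ¬ Relation.TransGen M.arc w w)
    {a d : M.V} (h : M.arc a d) : a ∉ M.desc d := fun ha =>
  hac a (Relation.TransGen.head' h ha)

lemma ne_of_arc (hac : ∀ w, ¬ Relation.TransGen M.arc w w)
    {a b : M.V} (h : M.arc a b) : a ≠ b := by
  rintro rfl; exact hac a (Relation.TransGen.single h)

/-- Reachability in the graph minus an edge `s(t,q)` with `q ∈ desc d`,
along directed paths ending outside `desc d`. -/
lemma reach_del_out (hac : ∀ w, ¬ Relation.TransGen M.arc w w)
    {d t q : M.V} (hq : q ∈ M.desc d) {x y : M.V}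
    (h : Relation.ReflTransGen M.arc x y) (hy : y ∉ M.desc d) :
    (M.ugraph.deleteEdges {s(t, q)}).Reachable x y := by
  induction h with
  | refl => exact SimpleGraph.Reachable.refl x
  | @tail b c hxb hbc ih =>
    have hbD : b ∉ M.desc d := fun hmem => hy (M.desc_closed hmem hbc)
    refine (ih hbD).trans (SimpleGraph.Adj.reachable ?_)
    rw [SimpleGraph.deleteEdges_adj]
    refine ⟨⟨ne_of_arc hac hbc, Or.inl hbc⟩, ?_⟩
    simp only [Set.mem_singleton_iff, Sym2.eq_iff]
    rintro (⟨rfl, rfl⟩ | ⟨rfl, rfl⟩)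
    · exact hy hq
    · exact hbD hq

/-- Reachability in the graph minus an edge `s(t,q)` with `t ∉ desc d`,
along directed paths starting inside `desc d`. -/
lemma reach_del_in (hac : ∀ w, ¬ Relation.TransGen M.arc w w)
    {d t q : M.V} (ht : t ∉ M.desc d) {x y : M.V}
    (hx : x ∈ M.desc d) (h : Relation.ReflTransGen M.arc x y) :
    (M.ugraph.deleteEdges {s(t, q)}).Reachable x y := by
  induction h with
  | refl => exact SimpleGraph.Reachable.refl x
  | @tail b c hxb hbc ih =>
    have hbD : b ∈ M.desc d := M.desc_closed_rtg hx hxb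
    refine ih.trans (SimpleGraph.Adj.reachable ?_)
    rw [SimpleGraph.deleteEdges_adj]
    refine ⟨⟨ne_of_arc hac hbc, Or.inl hbc⟩, ?_⟩
    simp only [Set.mem_singleton_iff, Sym2.eq_iff]
    rintro (⟨rfl, rfl⟩ | ⟨rfl, rfl⟩)
    · exact ht hbD
    · exact ht (M.desc_closed hbD hbc)

lemma parents_eq_singleton {u v : M.V} (hin : M.indeg v = 1) (hu : M.arc u v) :
    {z | M.arc z v} = {u} := by
  obtain ⟨w, hw⟩ := Set.ncard_eq_one.mp hin
  have huw : u ∈ {z | M.arc z v} := hu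
  rw [hw] at huw ⊢
  rw [Set.mem_singleton_iff] at huw
  rw [huw]

lemma root_not_mem_desc {v ρ : M.V} (hin : M.indeg v = 1) (hρ : M.indeg ρ = 0) :
    ρ ∉ M.desc v := by
  intro hρD
  rcases Relation.reflTransGen_iff_eq_or_transGen.mp hρD with h | h
  · rw [← h, hρ] at hin; exact Nat.zero_ne_one hin
  · have harc : ∃ b, M.arc b ρ := by
      cases h with
      | single h' => exact ⟨v, h'⟩
      | tail h1 h2 => exact ⟨_, h2⟩
    obtain ⟨b, hb⟩ := harc
    have hempty : {z | M.arc z ρ} = ∅ := (Set.ncard_eq_zero (Set.toFinite _)).mp hρ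
    rw [Set.eq_empty_iff_forall_notMem] at hempty
    exact hempty b hb

/-- Key structural lemma: the only arc entering `desc v` is `u → v`. -/
lemma entry (hphy : M.IsPhylo) {u v : M.V} (hcut : M.CutArc u v)
    (hin : M.indeg v = 1) {a b : M.V} (hab : M.arc a b) (ha : a ∉ M.desc v)
    (hb : b ∈ M.desc v) : b = v ∧ a = u := by
  have hac := hphy.1
  have huD : u ∉ M.desc v := parent_not_mem_desc hac hcut.1
  by_cases hbv : b = v
  · subst hbv
    have := parents_eq_singleton hin hcut.1
    have haP : a ∈ {z | M.arc z b} := hab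
    rw [this, Set.mem_singleton_iff] at haP
    exact ⟨rfl, haP⟩
  · exfalso
    apply hcut.2
    obtain ⟨ρ, hρ0, hρ2, hρall⟩ := hphy.2.2.2.1
    have hρD : ρ ∉ M.desc v := root_not_mem_desc hin hρ0
    -- ρ reaches every vertex outside desc v
    have hreachOut : ∀ w, w ∉ M.desc v →
        (M.ugraph.deleteEdges {s(u, v)}).Reachable ρ w := fun w hw =>
      reach_del_out hac (M.desc_self v) (hρall w) hw
    have hreachIn : ∀ w, w ∈ M.desc v →
        (M.ugraph.deleteEdges {s(u, v)}).Reachable v w := fun w hw =>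
      reach_del_in hac huD (M.desc_self v) hw
    have hadj : (M.ugraph.deleteEdges {s(u, v)}).Adj a b := by
      rw [SimpleGraph.deleteEdges_adj]
      refine ⟨⟨ne_of_arc hac hab, Or.inl hab⟩, ?_⟩
      simp only [Set.mem_singleton_iff, Sym2.eq_iff]
      rintro (⟨h1e, h2e⟩ | ⟨h1e, h2e⟩)
      · exact hbv h2e
      · exact ha (by rw [h1e]; exact M.desc_self v)
    have hρv : (M.ugraph.deleteEdges {s(u, v)}).Reachable ρ v :=
      ((hreachOut a ha).trans hadj.reachable).trans (hreachIn b hb).symm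
    rw [SimpleGraph.connected_iff]
    refine ⟨fun x y => ?_, ⟨v⟩⟩
    have key : ∀ w, (M.ugraph.deleteEdges {s(u, v)}).Reachable ρ w := by
      intro w
      by_cases hw : w ∈ M.desc v
      · exact hρv.trans (hreachIn w hw)
      · exact hreachOut w hw
    exact (key x).symm.trans (key y)

/-- A directed path crossing into `desc v` from outside reaches `u` first. -/
lemma cross_rtg (hphy : M.IsPhylo) {u v : M.V} (hcut : M.CutArc u v)
    (hin : M.indeg v = 1) {x y : M.V} (h : Relation.ReflTransGen M.arc x y) :
    x ∉ M.desc v → y ∈ M.desc v → Relation.ReflTransGen M.arc x u := by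
  induction h with
  | refl => intro h1 h2; exact absurd h2 h1
  | @tail b c hxb hbc ih =>
    intro hx hc
    by_cases hbD : b ∈ M.desc v
    · exact ih hx hbD
    · obtain ⟨-, rfl⟩ := entry hphy hcut hin hbc hbD hc
      exact hxb

/-- Every vertex of a binary network reaches a leaf. -/
lemma reach_leaf (hb : M.IsBinary) (w : M.V) :
    ∃ t : X, Relation.ReflTransGen M.arc w (M.leaf t) := by
  have hac := hb.1.1
  have wf : WellFounded (fun a b : M.V => Relation.TransGen M.arc b a) := by
    have h1 : IsTrans M.V (fun a b => Relation.TransGen M.arc b a) :=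
      ⟨fun a b c h1 h2 => h2.trans h1⟩
    have h2 : IsIrrefl M.V (fun a b => Relation.TransGen M.arc b a) :=
      ⟨fun a h => hac a h⟩
    exact Finite.wellFounded_of_trans_of_irrefl _
  refine wf.induction (C := fun w => ∃ t : X, Relation.ReflTransGen M.arc w (M.leaf t)) w ?_
  intro w ih
  by_cases hl : M.IsLeaf w
  · obtain ⟨t, ht⟩ := hl
    exact ⟨t, by rw [ht]⟩
  · have hout : M.outdeg w ≠ 0 := by
      rcases hb.2 w with h | h | h
      · exact absurd h hl
      · rw [h.2]; omega
      · rw [h.2]; omega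
    obtain ⟨b, hb'⟩ := Set.nonempty_of_ncard_ne_zero hout
    obtain ⟨t, ht⟩ := ih b (Relation.TransGen.single hb')
    exact ⟨t, Relation.ReflTransGen.head hb' ht⟩

lemma dipath_rtg' : ∀ (l : List M.V), l.Chain' M.arc → ∀ a b, l.head? = some a →
    l.getLast? = some b → Relation.ReflTransGen M.arc a b := by
  intro l
  induction l with
  | nil => intro _ a b h; simp at h
  | cons a' t ih =>
    intro hch a b ha hb
    simp only [List.head?_cons, Option.some.injEq] at ha
    subst ha
    cases t with
    | nil =>
      simp only [List.getLast?_singleton, Option.some.injEq] at hb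
      rw [hb]
    | cons c t' =>
      simp only [List.Chain', List.isChain_cons_cons] at hch
      rw [List.getLast?_cons_cons] at hb
      exact Relation.ReflTransGen.head hch.1 (ih hch.2 c b rfl hb)

lemma dipath_rtg {l : List M.V} {a b : M.V} (h : M.IsDiPath l a b) :
    Relation.ReflTransGen M.arc a b :=
  dipath_rtg' l h.1 a b h.2.1 h.2.2.1

/-- A directed path from outside `desc v` to inside contains `v`. -/
lemma cross_list (hphy : M.IsPhylo) {u v : M.V} (hcut : M.CutArc u v)
    (hin : M.indeg v = 1) : ∀ (l : List M.V), l.Chain' M.arc → ∀ a b,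
    l.head? = some a → l.getLast? = some b →
    a ∉ M.desc v → b ∈ M.desc v → v ∈ l := by
  intro l
  induction l with
  | nil => intro _ a b h; simp at h
  | cons a' t ih =>
    intro hch a b ha hb haD hbD
    simp only [List.head?_cons, Option.some.injEq] at ha
    subst ha
    cases t with
    | nil =>
      simp only [List.getLast?_singleton, Option.some.injEq] at hb
      subst hb
      exact absurd hbD haD
    | cons c t' =>
      simp only [List.Chain', List.isChain_cons_cons] at hch
      rw [List.getLast?_cons_cons] at hb
      by_cases hcD : c ∈ M.desc v
      · obtain ⟨rfl, -⟩ := entry hphy hcut hin hch.1 haD hcD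
        exact List.mem_cons_of_mem _ List.mem_cons_self
      · exact List.mem_cons_of_mem _ (ih hch.2 c b rfl hb hcD hbD)

lemma mem_listInterior {α : Type*} {l : List α} {x a b : α} (hx : x ∈ l)
    (ha : l.head? = some a) (hb : l.getLast? = some b) (hxa : x ≠ a) (hxb : x ≠ b) :
    x ∈ listInterior l := by
  cases l with
  | nil => simp at hx
  | cons a' t =>
    simp only [List.head?_cons, Option.some.injEq] at ha
    subst ha
    have hxt : x ∈ t := by
      rcases List.mem_cons.mp hx with h | h
      · exact absurd h hxa
      · exact h
    have hne : t ≠ [] := List.ne_nil_of_mem hxt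
    have hbt : t.getLast? = some b := by
      cases t with
      | nil => exact absurd rfl hne
      | cons c t' => rw [List.getLast?_cons_cons] at hb; exact hb
    have hlast : t.getLast hne = b := by
      rw [List.getLast?_eq_getLast hne, Option.some.injEq] at hbt
      exact hbt
    unfold listInterior
    simp only [List.tail_cons]
    rw [← List.dropLast_append_getLast hne] at hxt
    rcases List.mem_append.mp hxt with h | h
    · exact h
    · rw [List.mem_singleton] at h
      exact absurd (h.trans hlast) hxb

lemma not_leaf_head (hphy : M.IsPhylo) {v : M.V} (hout : 2 ≤ M.outdeg v)
    (t : X) : v ≠ M.leaf t := by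
  intro h
  have : M.outdeg v = 0 := (hphy.2.1 v).mpr ⟨t, h.symm⟩
  omega

/-- Structural SN-set lemma for the cluster of the split head of a cut arc. -/
lemma sn_struct (hbin : M.IsBinary) {u v : M.V} (hcut : M.CutArc u v)
    (hin : M.indeg v = 1) (hout : 2 ≤ M.outdeg v) {x y z : X}
    (hc : M.Consistent x y z) (hz : z ∈ M.cluster v)
    (hxy : x ∈ M.cluster v ∨ y ∈ M.cluster v) :
    x ∈ M.cluster v ∧ y ∈ M.cluster v := by
  have hphy := hbin.1
  have hac := hphy.1
  obtain ⟨hxy', hxz, hyz, v₀, w, hvw, p₁, p₂, p₃, p₄, h1, h2, h3, h4, hpw⟩ := hc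
  by_cases hwD : w ∈ M.desc v
  · exact ⟨hwD.trans (dipath_rtg h3), hwD.trans (dipath_rtg h4)⟩
  · exfalso
    have hv₀ : v₀ ∉ M.desc v := fun h => hwD (M.desc_closed_rtg h (dipath_rtg h2))
    have hzD : M.leaf z ∈ M.desc v := hz
    -- v is interior in p₁
    have hv1 : v ∈ listInterior p₁ := by
      have hm : v ∈ p₁ := cross_list hphy hcut hin p₁ h1.1 v₀ (M.leaf z)
        h1.2.1 h1.2.2.1 hv₀ hzD
      refine mem_listInterior hm h1.2.1 h1.2.2.1 ?_ (not_leaf_head hphy hout z)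
      rintro rfl; exact hv₀ (M.desc_self v)
    -- pairwise disjointness facts
    rw [List.pairwise_cons] at hpw
    obtain ⟨hd1, hpw'⟩ := hpw
    have hd13 : ∀ t ∈ listInterior p₁, t ∉ listInterior p₃ :=
      hd1 p₃ (by simp)
    have hd14 : ∀ t ∈ listInterior p₁, t ∉ listInterior p₄ :=
      hd1 p₄ (by simp)
    rcases hxy with hx | hy
    · have hv3 : v ∈ listInterior p₃ := by
        have hm : v ∈ p₃ := cross_list hphy hcut hin p₃ h3.1 w (M.leaf x)
          h3.2.1 h3.2.2.1 hwD hx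
        refine mem_listInterior hm h3.2.1 h3.2.2.1 ?_ (not_leaf_head hphy hout x)
        rintro rfl; exact hwD (M.desc_self v)
      exact hd13 v hv1 hv3
    · have hv4 : v ∈ listInterior p₄ := by
        have hm : v ∈ p₄ := cross_list hphy hcut hin p₄ h4.1 w (M.leaf y)
          h4.2.1 h4.2.2.1 hwD hy
        refine mem_listInterior hm h4.2.1 h4.2.2.1 ?_ (not_leaf_head hphy hout y)
        rintro rfl; exact hwD (M.desc_self v)
      exact hd14 v hv1 hv4

/-- The cluster of the split head of a cut arc of a level-1 network is not all of `X`. -/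
lemma cluster_ne_univ (hlev : M.IsLevel1) {u v : M.V} (hcut : M.CutArc u v)
    (hin : M.indeg v = 1) (hout : 2 ≤ M.outdeg v) : M.cluster v ≠ Set.univ := by
  intro huniv
  have hbin := hlev.1
  have hphy := hbin.1
  have hac := hphy.1
  have huD : u ∉ M.desc v := parent_not_mem_desc hac hcut.1
  have hleafD : ∀ t : X, M.leaf t ∈ M.desc v := by
    intro t
    have : t ∈ M.cluster v := by rw [huniv]; trivial
    exact this
  obtain ⟨ρ, hρ0, hρ2, hρall⟩ := hphy.2.2.2.1
  have hρD : ρ ∉ M.desc v := root_not_mem_desc hin hρ0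
  -- every vertex outside desc v reaches u
  have hru : ∀ w, w ∉ M.desc v → Relation.ReflTransGen M.arc w u := by
    intro w hw
    obtain ⟨t, ht⟩ := reach_leaf hbin w
    exact cross_rtg hphy hcut hin ht hw (hleafD t)
  -- out-neighbours of u are exactly {v}
  have houtu : {b | M.arc u b} = {v} := by
    apply Set.eq_singleton_iff_unique_mem.mpr
    refine ⟨hcut.1, ?_⟩
    intro b hb
    by_contra hbv
    by_cases hbD : b ∈ M.desc v
    · exact hbv (entry hphy hcut hin hb huD hbD).1
    · exact hac u (Relation.TransGen.head' hb (hru b hbD))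
  have hinu : M.indeg u = 2 := by
    rcases hbin.2 u with h | h | h
    · have : M.outdeg u = 0 := (hphy.2.1 u).mpr h
      rw [outdeg, houtu, Set.ncard_singleton] at this
      omega
    · have : M.outdeg u = 2 := h.2
      rw [outdeg, houtu, Set.ncard_singleton] at this
      omega
    · exact h.1
  have hρu : ρ ≠ u := by
    rintro rfl; rw [hρ0] at hinu; omega
  -- a maximal element m of the complement of desc v ∪ {u}
  have wf : WellFounded (fun a b : M.V => Relation.TransGen M.arc b a) := by
    have h1 : IsTrans M.V (fun a b => Relation.TransGen M.arc b a) :=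
      ⟨fun a b c h1 h2 => h2.trans h1⟩
    have h2 : IsIrrefl M.V (fun a b => Relation.TransGen M.arc b a) :=
      ⟨fun a h => hac a h⟩
    exact Finite.wellFounded_of_trans_of_irrefl _
  obtain ⟨m, hmS, hmax⟩ := wf.has_min {w | w ∉ M.desc v ∧ w ≠ u} ⟨ρ, hρD, hρu⟩
  obtain ⟨hmD, hmu⟩ := hmS
  -- m is not a leaf
  have hmleaf : ¬ M.IsLeaf m := by
    rintro ⟨t, rfl⟩; exact hmD (hleafD t)
  -- out-neighbours of m are contained in {u}
  have houtm : {b | M.arc m b} ⊆ {u} := by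
    intro b hb
    by_cases hbD : b ∈ M.desc v
    · exact absurd (entry hphy hcut hin hb hmD hbD).2 hmu
    · by_contra hbu
      exact hmax b ⟨hbD, hbu⟩ (Relation.TransGen.single hb)
  have houtm1 : M.outdeg m ≤ 1 := by
    have := Set.ncard_le_ncard houtm (Set.toFinite _)
    rwa [Set.ncard_singleton] at this
  -- so m is a hybrid vertex with single child u
  have hm2 : M.indeg m = 2 ∧ M.outdeg m = 1 := by
    rcases hbin.2 m with h | h | h
    · exact absurd h hmleaf
    · omega
    · exact h
  have harcmu : M.arc m u := by
    have hne : {b | M.arc m b}.Nonempty := by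
      apply Set.nonempty_of_ncard_ne_zero
      rw [← outdeg] at *
      omega
    obtain ⟨b, hb⟩ := hne
    have := houtm hb
    rw [Set.mem_singleton_iff] at this
    rwa [this] at hb
  -- the other parent p of u
  obtain ⟨a₁, a₂, ha12, hP⟩ := Set.ncard_eq_two.mp (hinu : {z | M.arc z u}.ncard = 2)
  have hmP : m ∈ ({a₁, a₂} : Set M.V) := by rw [← hP]; exact harcmu
  have ha1 : M.arc a₁ u := by
    have h' : a₁ ∈ {z | M.arc z u} := by rw [hP]; exact Set.mem_insert _ _
    exact h'
  have ha2 : M.arc a₂ u := by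
    have h' : a₂ ∈ {z | M.arc z u} := by
      rw [hP]; exact Set.mem_insert_of_mem _ rfl
    exact h'
  rw [Set.mem_insert_iff, Set.mem_singleton_iff] at hmP
  obtain ⟨p, hpP, hpm⟩ : ∃ p, M.arc p u ∧ p ≠ m := by
    rcases hmP with h | h
    · exact ⟨a₂, ha2, fun e => ha12 (h.symm.trans e.symm)⟩
    · exact ⟨a₁, ha1, fun e => ha12 (e.trans h)⟩
  -- m and p are not descendants of u
  have hmB : m ∉ M.desc u := parent_not_mem_desc hac harcmu
  have hpB : p ∉ M.desc u := parent_not_mem_desc hac hpP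
  -- reachability avoiding the edge s(m, u)
  have hreach : (M.ugraph.deleteEdges {s(m, u)}).Reachable m u := by
    have h1 : (M.ugraph.deleteEdges {s(m, u)}).Reachable ρ m :=
      reach_del_out hac (M.desc_self u) (hρall m) hmB
    have h2 : (M.ugraph.deleteEdges {s(m, u)}).Reachable ρ p :=
      reach_del_out hac (M.desc_self u) (hρall p) hpB
    have h3 : (M.ugraph.deleteEdges {s(m, u)}).Adj p u := by
      rw [SimpleGraph.deleteEdges_adj]
      refine ⟨⟨ne_of_arc hac hpP, Or.inl hpP⟩, ?_⟩
      simp only [Set.mem_singleton_iff, Sym2.eq_iff]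
      rintro (⟨h1e, -⟩ | ⟨h1e, -⟩)
      · exact hpm h1e
      · exact hac u (Relation.TransGen.single (h1e ▸ hpP))
    exact h1.symm.trans (h2.trans h3.reachable)
  have hadjmu : M.ugraph.Adj m u := ⟨ne_of_arc hac harcmu, Or.inl harcmu⟩
  have hcyc : ∃ (c : M.V) (q : M.ugraph.Walk c c), q.IsCycle ∧ s(m, u) ∈ q.edges := by
    rw [← SimpleGraph.adj_and_reachable_delete_edges_iff_exists_cycle]
    exact ⟨hadjmu, hreach⟩
  obtain ⟨c, q, hq, hqe⟩ := hcyc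
  have hmsupp : m ∈ q.support := q.fst_mem_support_of_mem_edges hqe
  have husupp : u ∈ q.support := q.snd_mem_support_of_mem_edges hqe
  have hhybm : M.IsHybrid m := by rw [IsHybrid, hm2.1]
  have hhybu : M.IsHybrid u := by rw [IsHybrid, hinu]
  have := hlev.2.2 c q hq m hmsupp u husupp hhybm hhybu
  exact ne_of_arc hac harcmu this

end Net

end StmtAux

/-- in the setting of compatible clusters, if moreover
`C_N(v) ⊊ C_{N'}(v')` then `C_N(v)` is not a maximal SN-set of `R(N)`. -/
theorem stmt11 {X : Type} (N N' : Net X)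
    (hlev : N.IsLevel1) (hlev' : N'.IsLevel1)
    (hsub : N.tripletSet ⊆ N'.tripletSet)
    (u v : N.V) (hcut : N.CutArc u v)
    (hsplit : N.indeg v = 1 ∧ 2 ≤ N.outdeg v)
    (u' v' : N'.V) (hcut' : N'.CutArc u' v')
    (hsplit' : N'.indeg v' = 1 ∧ 2 ≤ N'.outdeg v')
    (hss : N.cluster v ⊂ N'.cluster v') :
    ¬ N.IsMaximalSNSet (N.cluster v) := by
  rintro ⟨hSN, hne, hmax⟩
  have hbin' := hlev'.1
  have hSN' : N.IsSNSet (N'.cluster v') := by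
    intro a b c hcons haS hcS
    have ht : (s(a, b), c) ∈ N.tripletSet := ⟨a, b, rfl, hcons⟩
    obtain ⟨a', b', heq, hcons'⟩ := hsub ht
    rw [Sym2.eq_iff] at heq
    rcases heq with ⟨h1, h2⟩ | ⟨h1, h2⟩
    · subst h1; subst h2
      exact (Net.sn_struct hbin' hcut' hsplit'.1 hsplit'.2 hcons' hcS (Or.inl haS)).2
    · subst h1; subst h2
      exact (Net.sn_struct hbin' hcut' hsplit'.1 hsplit'.2 hcons' hcS (Or.inr haS)).1
  have hne' : N'.cluster v' ≠ Set.univ :=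
    Net.cluster_ne_univ hlev' hcut' hsplit'.1 hsplit'.2
  have heq := hmax _ hSN' hne' hss.subset
  exact hss.ne heq
end
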